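/- arXiv:2503.16697 — 2 statements merged into one kernel-verified Lean document; each statement's English description precedes it below -/
import Mathlib

section
/- Let k be a field of prime characteristic p, let P be a finite p-group, and let E be a finite group of order prime to p acting on P by automorphisms. Then: (i) every E-stable derivation f on kP extends uniquely to a derivation f̂ on the group algebra k(P⋊E) whose kernel contains kE (explicitly, f̂(uy) = f(u)y for u ∈ P, y ∈ E); (ii) the correspondence f ↦ f̂ induces an injective Lie algebra homomorphism HH^1(kP)^E → HH^1(k(P⋊E)); (iii) if E acts freely on P∖{1}, this homomorphism is an isomorphism. -/
namespace HHPaper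

open MonoidAlgebra

attribute [local instance 100] LieRing.ofAssociativeRing

section Derivations

variable {k A : Type*} [CommRing k] [Ring A] [Algebra k A]

/-- `f` is a derivation on the associative unital `k`-algebra `A`. -/
def IsDerivation (f : Module.End k A) : Prop :=
  ∀ a b : A, f (a * b) = f a * b + a * f b

lemma IsDerivation.add {f g : Module.End k A} (hf : IsDerivation f) (hg : IsDerivation g) :
    IsDerivation (f + g) := by
  intro a b
  simp only [LinearMap.add_apply, hf a b, hg a b, add_mul, mul_add]
  abel

lemma IsDerivation.zero : IsDerivation (0 : Module.End k A) := by
  intro a b; simp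

lemma IsDerivation.smul (c : k) {f : Module.End k A} (hf : IsDerivation f) :
    IsDerivation (c • f) := by
  intro a b
  simp only [LinearMap.smul_apply, hf a b, smul_add, smul_mul_assoc, mul_smul_comm]

lemma IsDerivation.lie {f g : Module.End k A} (hf : IsDerivation f) (hg : IsDerivation g) :
    IsDerivation ⁅f, g⁆ := by
  intro a b
  simp only [Ring.lie_def, LinearMap.sub_apply, Module.End.mul_apply]
  rw [hg a b, hf a b, map_add, map_add, hf (g a) b, hf a (g b), hg (f a) b, hg a (f b)]
  simp only [sub_mul, mul_sub, add_mul, mul_add]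
  abel

variable (k A) in
/-- The Lie algebra of derivations on `A`, as a Lie subalgebra of `Module.End k A`. -/
def derivLie : LieSubalgebra k (Module.End k A) where
  carrier := {f | IsDerivation f}
  add_mem' := fun hf hg => hf.add hg
  zero_mem' := IsDerivation.zero
  smul_mem' := fun c _ hf => hf.smul c
  lie_mem' := fun hf hg => hf.lie hg

@[simp] lemma mem_derivLie {f : Module.End k A} :
    f ∈ derivLie k A ↔ IsDerivation f := Iff.rfl

variable (k) in
/-- The inner derivation `[c, -]` associated with `c : A`. -/
def innerDeriv (c : A) : Module.End k A :=
  LinearMap.mulLeft k c - LinearMap.mulRight k c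

@[simp] lemma innerDeriv_apply (c a : A) : innerDeriv k c a = c * a - a * c := rfl

lemma innerDeriv_isDerivation (c : A) : IsDerivation (innerDeriv k c) := by
  intro a b
  simp only [innerDeriv_apply, sub_mul, mul_sub, mul_assoc]
  abel

lemma innerDeriv_add (c d : A) :
    innerDeriv k (c + d) = innerDeriv k c + innerDeriv k d := by
  ext a; simp only [innerDeriv_apply, LinearMap.add_apply, add_mul, mul_add]; abel

lemma innerDeriv_smul (s : k) (c : A) :
    innerDeriv k (s • c) = s • innerDeriv k c := by
  ext a
  simp only [innerDeriv_apply, LinearMap.smul_apply, smul_sub, smul_mul_assoc, mul_smul_comm]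

lemma innerDeriv_zero : innerDeriv k (0 : A) = 0 := by
  ext a; simp

variable (k A) in
/-- The Lie ideal of inner derivations inside the Lie algebra of derivations. -/
def innerIdeal : LieIdeal k (derivLie k A) where
  carrier := {f | ∃ c : A, (f : Module.End k A) = innerDeriv k c}
  add_mem' := by
    rintro f g ⟨c, hc⟩ ⟨d, hd⟩
    exact ⟨c + d, by simp [innerDeriv_add, hc, hd]⟩
  zero_mem' := ⟨0, by simp [innerDeriv_zero]⟩
  smul_mem' := by
    rintro s f ⟨c, hc⟩
    exact ⟨s • c, by rw [innerDeriv_smul]; rw [← hc]; rfl⟩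
  lie_mem := by
    rintro x m ⟨c, hc⟩
    refine ⟨(x : Module.End k A) c, ?_⟩
    have hx : IsDerivation (x : Module.End k A) := x.2
    ext a
    have hb : ((⁅x, m⁆ : derivLie k A) : Module.End k A) =
        ⁅(x : Module.End k A), (m : Module.End k A)⁆ := rfl
    rw [hb, hc]
    simp only [Ring.lie_def, LinearMap.sub_apply, Module.End.mul_apply, innerDeriv_apply,
      map_sub, hx c a, hx a c]
    abel

variable (k A) in
/-- First Hochschild cohomology of `A`, as the quotient Lie algebra of derivations
modulo inner derivations. -/
abbrev HH1 := (derivLie k A) ⧸ (innerIdeal k A)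

variable (k A) in
/-- The Jacobson radical of `A`, regarded as a `k`-subspace of `A`. -/
def jacRad : Submodule k A :=
  Submodule.restrictScalars k (Ideal.jacobson (⊥ : Ideal A))

variable (k A) in
/-- The Lie subalgebra of derivations with image contained in the `m`-th power of
the Jacobson radical. -/
def derivRadLie (m : ℕ) : LieSubalgebra k (Module.End k A) where
  carrier := {f | IsDerivation f ∧ LinearMap.range f ≤ (jacRad k A) ^ m}
  add_mem' := by
    rintro f g ⟨hf, hf'⟩ ⟨hg, hg'⟩
    refine ⟨hf.add hg, ?_⟩
    rintro x ⟨a, rfl⟩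
    exact add_mem (hf' ⟨a, rfl⟩) (hg' ⟨a, rfl⟩)
  zero_mem' := ⟨IsDerivation.zero, by rintro x ⟨a, rfl⟩; simp⟩
  smul_mem' := by
    rintro s f ⟨hf, hf'⟩
    refine ⟨hf.smul s, ?_⟩
    rintro x ⟨a, rfl⟩
    exact Submodule.smul_mem _ s (hf' ⟨a, rfl⟩)
  lie_mem' := by
    rintro f g ⟨hf, hf'⟩ ⟨hg, hg'⟩
    refine ⟨hf.lie hg, ?_⟩
    rintro x ⟨a, rfl⟩
    have : ⁅f, g⁆ a = f (g a) - g (f a) := by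
      simp [Ring.lie_def, Module.End.mul_apply]
    rw [this]
    exact sub_mem (hf' ⟨g a, rfl⟩) (hg' ⟨f a, rfl⟩)

@[simp] lemma mem_derivRadLie {m : ℕ} {f : Module.End k A} :
    f ∈ derivRadLie k A m ↔ IsDerivation f ∧ LinearMap.range f ≤ (jacRad k A) ^ m := Iff.rfl

variable (k A) in
/-- The Loewy length of `A`: the least positive `n` with `J(A)^n = 0`. -/
noncomputable def loewyLength : ℕ :=
  sInf {n : ℕ | 0 < n ∧ (jacRad k A) ^ n = ⊥}

/-- A semisimple-style multiplicity freeness: any two isomorphic simple submodules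
coincide. -/
def IsMultiplicityFree (R M : Type*) [Ring R] [AddCommGroup M] [Module R M] : Prop :=
  ∀ S T : Submodule R M, IsSimpleModule R S → IsSimpleModule R T →
    Nonempty (S ≃ₗ[R] T) → S = T

end Derivations


section GroupAlgebra

open MonoidAlgebra

variable (k : Type*) [CommRing k] {P E : Type*} [Group P] [Group E]

/-- The subgroup `[P,E]` generated by the elements `(ᵉu)u⁻¹`. -/
def commSubgroupE (φ : E →* MulAut P) : Subgroup P :=
  Subgroup.closure {x : P | ∃ (e : E) (u : P), x = φ e u * u⁻¹}

/-- A linear endomorphism of `kP` is `E`-stable if it commutes with the `E`-action. -/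
def IsEStable (φ : E →* MulAut P) (f : Module.End k (MonoidAlgebra k P)) : Prop :=
  ∀ (e : E) (a : MonoidAlgebra k P),
    f (MonoidAlgebra.domCongr k k (φ e) a) = MonoidAlgebra.domCongr k k (φ e) (f a)

/-- The Lie algebra `Der(kP)^E` of `E`-stable derivations on the group algebra `kP`. -/
def eStableDerivLie (φ : E →* MulAut P) :
    LieSubalgebra k (Module.End k (MonoidAlgebra k P)) where
  carrier := {f | IsDerivation f ∧ IsEStable k φ f}
  add_mem' := by
    rintro f g ⟨hf, hf'⟩ ⟨hg, hg'⟩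
    exact ⟨hf.add hg, fun e a => by simp [LinearMap.add_apply, hf' e a, hg' e a]⟩
  zero_mem' := ⟨IsDerivation.zero, fun e a => by simp⟩
  smul_mem' := by
    rintro s f ⟨hf, hf'⟩
    refine ⟨hf.smul s, fun e a => ?_⟩
    simp only [LinearMap.smul_apply, hf' e a, map_smul]
  lie_mem' := by
    rintro f g ⟨hf, hf'⟩ ⟨hg, hg'⟩
    refine ⟨hf.lie hg, fun e a => ?_⟩
    simp only [Ring.lie_def, LinearMap.sub_apply, Module.End.mul_apply, hf' e, hg' e, map_sub]

@[simp] lemma mem_eStableDerivLie {φ : E →* MulAut P} {f : Module.End k (MonoidAlgebra k P)} :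
    f ∈ eStableDerivLie k φ ↔ IsDerivation f ∧ IsEStable k φ f := Iff.rfl

end GroupAlgebra

section Commutant

variable (k : Type*) [CommRing k] {Q : Type*} [AddCommGroup Q] [Module k Q]
  {E : Type*} [Group E]

/-- The Lie subalgebra of `Module.End k Q` of endomorphisms commuting with a given
`E`-action, i.e. `End_{kE}(Q)`. -/
def commutantLie (ρ : E →* (Q ≃ₗ[k] Q)) : LieSubalgebra k (Module.End k Q) where
  carrier := {g | ∀ (e : E) (x : Q), g (ρ e x) = ρ e (g x)}
  add_mem' := by
    intro f g hf hg e x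
    simp [LinearMap.add_apply, hf e x, hg e x]
  zero_mem' := by intro e x; simp
  smul_mem' := by
    intro s f hf e x
    simp [LinearMap.smul_apply, hf e x]
  lie_mem' := by
    intro f g hf hg e x
    simp only [Ring.lie_def, LinearMap.sub_apply, Module.End.mul_apply, hf e, hg e, map_sub]

end Commutant

section SDP

open SemidirectProduct

variable (k : Type*) [CommRing k] {P E : Type*} [Group P] [Group E] (φ : E →* MulAut P)

/-- The canonical embedding of `kP` into `k(P⋊E)`. -/
noncomputable abbrev iotaP : MonoidAlgebra k P →ₐ[k] MonoidAlgebra k (P ⋊[φ] E) :=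
  MonoidAlgebra.mapDomainAlgHom k k (SemidirectProduct.inl : P →* P ⋊[φ] E)

/-- The Lie subalgebra `HH^1(kP)^E` of `HH^1(kP)`: the classes of `E`-stable derivations. -/
def eStableHH1 : LieSubalgebra k (HH1 k (MonoidAlgebra k P)) where
  carrier := {x | ∃ f : derivLie k (MonoidAlgebra k P),
    IsEStable k φ (f : Module.End k (MonoidAlgebra k P)) ∧
    LieSubmodule.Quotient.mk (N := innerIdeal k (MonoidAlgebra k P)) f = x}
  add_mem' := by
    rintro x y ⟨f, hf, rfl⟩ ⟨g, hg, rfl⟩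
    refine ⟨f + g, fun e a => ?_, by rw [← Submodule.Quotient.mk_add]⟩
    have hfg : ((f + g : derivLie k (MonoidAlgebra k P)) :
        Module.End k (MonoidAlgebra k P)) = ↑f + ↑g := rfl
    simp only [hfg, LinearMap.add_apply, hf e a, hg e a, map_add]
  zero_mem' := by
    refine ⟨0, fun e a => ?_, by rw [← (Submodule.Quotient.mk_zero _)]⟩
    simp
  smul_mem' := by
    rintro s x ⟨f, hf, rfl⟩
    refine ⟨s • f, fun e a => ?_, by rw [← Submodule.Quotient.mk_smul]⟩
    have hsf : ((s • f : derivLie k (MonoidAlgebra k P)) :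
        Module.End k (MonoidAlgebra k P)) = s • (f : Module.End k (MonoidAlgebra k P)) := rfl
    simp only [hsf, LinearMap.smul_apply, hf e a, map_smul]
  lie_mem' := by
    rintro x y ⟨f, hf, rfl⟩ ⟨g, hg, rfl⟩
    refine ⟨⁅f, g⁆, fun e a => ?_, by rw [LieSubmodule.Quotient.mk_bracket]⟩
    have hfg : ((⁅f, g⁆ : derivLie k (MonoidAlgebra k P)) :
        Module.End k (MonoidAlgebra k P)) = ⁅(f : Module.End k (MonoidAlgebra k P)), ↑g⁆ := rfl
    simp only [hfg, Ring.lie_def, LinearMap.sub_apply, Module.End.mul_apply,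
      hf e, hg e, map_sub]

end SDP


section Proof

open SemidirectProduct

variable {k : Type*} [Field k] {P E : Type*} [Group P] [Group E] (φ : E →* MulAut P)

local notation "kP" => MonoidAlgebra k P
local notation "AA" => MonoidAlgebra k (P ⋊[φ] E)

/-- extensionality from values on `single x 1` -/
lemma lhom_ext₁ {G N : Type*} [Monoid G] [AddCommMonoid N] [Module k N]
    {f g : MonoidAlgebra k G →ₗ[k] N}
    (H : ∀ x : G, f (MonoidAlgebra.single x 1) = g (MonoidAlgebra.single x 1)) : f = g := by
  refine MonoidAlgebra.lhom_ext' fun x => LinearMap.ext fun c => ?_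
  have h1 : (MonoidAlgebra.single x c : MonoidAlgebra k G) =
      c • MonoidAlgebra.single x 1 := by
    rw [MonoidAlgebra.smul_single', mul_one]
  simp only [LinearMap.comp_apply, MonoidAlgebra.lsingle_apply, h1, map_smul, H x]

lemma ma_induction {G : Type*} [Monoid G] {p : MonoidAlgebra k G → Prop}
    (a : MonoidAlgebra k G) (h0 : p 0)
    (hadd : ∀ f g, p f → p g → p (f + g))
    (hsingle : ∀ (x : G) (c : k), p (MonoidAlgebra.single x c)) : p a :=
  MonoidAlgebra.induction_linear a h0 hadd hsingle

lemma IsDerivation.map_one' {B : Type*} [Ring B] [Algebra k B] {f : Module.End k B}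
    (hf : IsDerivation f) : f 1 = 0 := by
  have := hf 1 1
  simp only [mul_one, one_mul] at this
  exact left_eq_add.mp this

lemma isDerivation_of_single {G : Type*} [Monoid G] {F : Module.End k (MonoidAlgebra k G)}
    (h : ∀ g h' : G, F (MonoidAlgebra.single g 1 * MonoidAlgebra.single h' 1) =
      F (MonoidAlgebra.single g 1) * MonoidAlgebra.single h' 1 +
      MonoidAlgebra.single g 1 * F (MonoidAlgebra.single h' 1)) :
    IsDerivation F := by
  have h' : ∀ (x y : G) (c d : k), F (MonoidAlgebra.single x c * MonoidAlgebra.single y d) =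
      F (MonoidAlgebra.single x c) * MonoidAlgebra.single y d +
      MonoidAlgebra.single x c * F (MonoidAlgebra.single y d) := by
    intro x y c d
    have hx : (MonoidAlgebra.single x c : MonoidAlgebra k G) =
        c • MonoidAlgebra.single x 1 := by rw [MonoidAlgebra.smul_single', mul_one]
    have hy : (MonoidAlgebra.single y d : MonoidAlgebra k G) =
        d • MonoidAlgebra.single y 1 := by rw [MonoidAlgebra.smul_single', mul_one]
    rw [hx, hy, smul_mul_assoc, mul_smul_comm, map_smul, map_smul, map_smul, map_smul,
      h x y]
    simp only [smul_add, smul_mul_assoc, mul_smul_comm, smul_smul, mul_comm c d]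
  intro a b
  induction a using ma_induction with
  | h0 => simp
  | hadd f g hf hg =>
    simp only [add_mul, map_add, hf, hg]
    abel
  | hsingle x c =>
    induction b using ma_induction with
    | h0 => simp
    | hadd f g hf hg =>
      simp only [mul_add, map_add, hf, hg]
      abel
    | hsingle y d => exact h' x y c d

/-- `ι` for `iotaP` -/
local notation "ιι" => iotaP k φ

lemma iota_single (u : P) (c : k) :
    ιι (MonoidAlgebra.single u c) = MonoidAlgebra.single (inl u : P ⋊[φ] E) c := by
  simp [iotaP, MonoidAlgebra.mapDomainAlgHom, Finsupp.mapDomain_single]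

lemma iota_apply_one (a : kP) (u : P) :
    (ιι a).coeff (⟨u, 1⟩ : P ⋊[φ] E) = a.coeff u := by
  have h1 : (ιι a).coeff = Finsupp.mapDomain (inl : P →* P ⋊[φ] E) a.coeff := rfl
  have h2 : (⟨u, (1:E)⟩ : P ⋊[φ] E) = inl u := rfl
  rw [h1, h2, Finsupp.mapDomain_apply (by exact SemidirectProduct.inl_injective) a.coeff u]

lemma iota_apply_ne (a : kP) (u : P) {y : E} (hy : y ≠ 1) :
    (ιι a).coeff (⟨u, y⟩ : P ⋊[φ] E) = 0 := by
  have h1 : (ιι a).coeff = Finsupp.mapDomain (inl : P →* P ⋊[φ] E) a.coeff := rfl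
  rw [h1, Finsupp.mapDomain_notin_range]
  rintro ⟨v, hv⟩
  apply hy
  have := congrArg SemidirectProduct.right hv
  simpa using this.symm

lemma inl_mul_inr (u : P) (y : E) : (inl u : P ⋊[φ] E) * inr y = ⟨u, y⟩ := by
  ext <;> simp

lemma inr_mul_inl (y : E) (u : P) : (inr y : P ⋊[φ] E) * inl u = ⟨φ y u, y⟩ := by
  ext <;> simp

lemma single_eq_iota_mul (u : P) (y : E) (c : k) :
    (MonoidAlgebra.single (⟨u, y⟩ : P ⋊[φ] E) c) =
      ιι (MonoidAlgebra.single u c) * MonoidAlgebra.single (inr y : P ⋊[φ] E) 1 := by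
  rw [iota_single, MonoidAlgebra.single_mul_single, mul_one, inl_mul_inr]

lemma inr_mul_iota (y : E) (a : kP) :
    MonoidAlgebra.single (inr y : P ⋊[φ] E) 1 * ιι a =
      ιι (MonoidAlgebra.domCongr k k (φ y) a) * MonoidAlgebra.single (inr y : P ⋊[φ] E) 1 := by
  induction a using ma_induction with
  | h0 => simp
  | hadd f g hf hg => rw [map_add, mul_add, hf, hg, map_add, map_add, add_mul]
  | hsingle v c =>
    rw [MonoidAlgebra.domCongr_single, iota_single, iota_single,
      MonoidAlgebra.single_mul_single, MonoidAlgebra.single_mul_single,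
      inr_mul_inl, inl_mul_inr, one_mul, mul_one]

lemma inr_mul_inr (y z : E) :
    (MonoidAlgebra.single (inr y : P ⋊[φ] E) 1) * MonoidAlgebra.single (inr z : P ⋊[φ] E) 1 =
      MonoidAlgebra.single (inr (y * z) : P ⋊[φ] E) 1 := by
  rw [MonoidAlgebra.single_mul_single, mul_one, map_mul]

lemma inr_mul_iota' (y : E) (a : kP) (X : AA) :
    MonoidAlgebra.single (inr y : P ⋊[φ] E) 1 * (ιι a * X) =
      ιι (MonoidAlgebra.domCongr k k (φ y) a) *
        (MonoidAlgebra.single (inr y : P ⋊[φ] E) 1 * X) := by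
  rw [← mul_assoc, inr_mul_iota, mul_assoc]

lemma single_inr_one : (MonoidAlgebra.single (inr (1:E) : P ⋊[φ] E) 1) = (1 : AA) := by
  rw [map_one]
  rfl

lemma tau_one (a : kP) : MonoidAlgebra.domCongr k k (φ (1:E)) a = a := by
  rw [map_one φ]
  induction a using ma_induction with
  | h0 => simp
  | hadd f g hf hg => rw [map_add, hf, hg]
  | hsingle v c => rw [MonoidAlgebra.domCongr_single, MulAut.one_apply]

lemma tau_tau (y z : E) (a : kP) :
    MonoidAlgebra.domCongr k k (φ y) (MonoidAlgebra.domCongr k k (φ z) a) =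
      MonoidAlgebra.domCongr k k (φ (y * z)) a := by
  induction a using ma_induction with
  | h0 => simp
  | hadd f g hf hg => simp only [map_add, hf, hg]
  | hsingle v c =>
    simp only [MonoidAlgebra.domCongr_single, map_mul φ, MulAut.mul_apply]

noncomputable def hatf (f : Module.End k kP) : Module.End k AA :=
  (Finsupp.lsum k fun g : P ⋊[φ] E =>
    LinearMap.toSpanSingleton k AA
      (ιι (f (MonoidAlgebra.single g.left 1)) *
        MonoidAlgebra.single (inr g.right : P ⋊[φ] E) 1)) ∘ₗ
    (MonoidAlgebra.coeffLinearEquiv k).toLinearMap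

lemma hatf_single (f : Module.End k kP) (u : P) (y : E) (c : k) :
    hatf φ f (MonoidAlgebra.single (⟨u, y⟩ : P ⋊[φ] E) c) =
      c • (ιι (f (MonoidAlgebra.single u 1)) *
        MonoidAlgebra.single (inr y : P ⋊[φ] E) 1) := by
  have hc : (MonoidAlgebra.coeffLinearEquiv k).toLinearMap
      (MonoidAlgebra.single (⟨u, y⟩ : P ⋊[φ] E) c) = Finsupp.single (⟨u, y⟩ : P ⋊[φ] E) c := rfl
  rw [hatf, LinearMap.comp_apply, hc]
  erw [Finsupp.lsum_single, LinearMap.toSpanSingleton_apply]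

lemma hatf_iota_mul (f : Module.End k kP) (a : kP) (y : E) :
    hatf φ f (ιι a * MonoidAlgebra.single (inr y : P ⋊[φ] E) 1) =
      ιι (f a) * MonoidAlgebra.single (inr y : P ⋊[φ] E) 1 := by
  induction a using ma_induction with
  | h0 => simp
  | hadd p q hp hq => rw [map_add, add_mul, map_add, hp, hq, map_add, map_add, add_mul]
  | hsingle v c =>
    rw [← single_eq_iota_mul, hatf_single]
    have h1 : (MonoidAlgebra.single v c : kP) = c • MonoidAlgebra.single v 1 := by
      rw [MonoidAlgebra.smul_single', mul_one]
    rw [h1, map_smul, map_smul, smul_mul_assoc]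

lemma hatf_iota (f : Module.End k kP) (a : kP) : hatf φ f (ιι a) = ιι (f a) := by
  have := hatf_iota_mul φ f a 1
  rw [single_inr_one, mul_one, mul_one] at this
  exact this

lemma hatf_inr {f : Module.End k kP} (hf : IsDerivation f) (y : E) :
    hatf φ f (MonoidAlgebra.single (inr y : P ⋊[φ] E) 1) = 0 := by
  have h : (inr y : P ⋊[φ] E) = ⟨1, y⟩ := rfl
  rw [h, hatf_single, one_smul]
  have h1 : (MonoidAlgebra.single (1:P) 1 : kP) = 1 := rfl
  rw [h1, hf.map_one', map_zero, zero_mul]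

lemma hatf_isDerivation {f : Module.End k kP} (hf : IsDerivation f)
    (hst : IsEStable k φ f) : IsDerivation (hatf φ f) := by
  apply isDerivation_of_single
  rintro ⟨u, y⟩ ⟨v, z⟩
  rw [MonoidAlgebra.single_mul_single, one_mul]
  have hmul : (⟨u, y⟩ : P ⋊[φ] E) * ⟨v, z⟩ = ⟨u * φ y v, y * z⟩ := rfl
  rw [hmul, hatf_single, hatf_single, hatf_single, one_smul, one_smul, one_smul]
  have h1 : (MonoidAlgebra.single (u * φ y v) 1 : kP) =
      MonoidAlgebra.single u 1 * MonoidAlgebra.single (φ y v) 1 := by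
    rw [MonoidAlgebra.single_mul_single, mul_one]
  have h2 : (MonoidAlgebra.single (φ y v) 1 : kP) =
      MonoidAlgebra.domCongr k k (φ y) (MonoidAlgebra.single v 1) := by
    rw [MonoidAlgebra.domCongr_single]
  rw [h1, hf _ _, h2, hst y, single_eq_iota_mul φ v z, single_eq_iota_mul φ u y]
  simp only [map_add, map_mul, add_mul, mul_assoc]
  rw [inr_mul_iota' φ y, inr_mul_iota' φ y]
  simp only [← mul_assoc, MonoidAlgebra.single_mul_single, one_mul]

lemma hatf_unique {f : Module.End k kP} {g : Module.End k AA} (hg : IsDerivation g)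
    (hgi : ∀ a : kP, g (ιι a) = ιι (f a))
    (hge : ∀ y : E, g (MonoidAlgebra.single (inr y : P ⋊[φ] E) 1) = 0) :
    g = hatf φ f := by
  refine lhom_ext₁ fun x => ?_
  obtain ⟨u, y⟩ := x
  rw [hatf_single, one_smul, single_eq_iota_mul, hg _ _, hgi, hge, mul_zero, add_zero]

/-- projection onto the `y`-component `kP·y` of `k(P⋊E)` -/
noncomputable def pic (y : E) : AA →ₗ[k] kP where
  toFun x := MonoidAlgebra.ofCoeff (Finsupp.comapDomain (fun u : P => (⟨u, y⟩ : P ⋊[φ] E))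
    x.coeff (Set.injOn_of_injective (fun a b h => by
      simpa using congrArg SemidirectProduct.left h)))
  map_add' x₁ x₂ := by
    ext u
    simp only [MonoidAlgebra.coeff_ofCoeff, MonoidAlgebra.coeff_add, Finsupp.add_apply,
      Finsupp.comapDomain_apply]
  map_smul' s x := by
    ext u
    simp only [MonoidAlgebra.coeff_ofCoeff, MonoidAlgebra.coeff_smul, Finsupp.smul_apply,
      Finsupp.comapDomain_apply, RingHom.id_apply]

lemma pic_apply (y : E) (x : AA) (u : P) : (pic φ y x).coeff u = x.coeff ⟨u, y⟩ :=
  Finsupp.comapDomain_apply _ _ _ _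

lemma pic_iota_one (a : kP) : pic φ 1 (ιι a) = a := by
  ext u
  rw [pic_apply, iota_apply_one]

lemma pic_iota_ne {y : E} (hy : y ≠ 1) (a : kP) : pic φ y (ιι a) = 0 := by
  ext u
  rw [pic_apply, iota_apply_ne φ a u hy]
  rfl

lemma pic_mul_iota (y : E) (X : AA) (b : kP) :
    pic φ y (X * ιι b) = pic φ y X * MonoidAlgebra.domCongr k k (φ y) b := by
  induction b using ma_induction with
  | h0 => simp
  | hadd p q hp hq => rw [map_add, mul_add, map_add, hp, hq, map_add, mul_add]
  | hsingle u d =>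
    refine MonoidAlgebra.ext (Finsupp.ext fun v => ?_)
    rw [pic_apply, MonoidAlgebra.domCongr_single, iota_single,
      MonoidAlgebra.mul_single_apply, MonoidAlgebra.mul_single_apply, pic_apply]
    congr 2
    have h1 : ((inl u : P ⋊[φ] E))⁻¹ = inl u⁻¹ := by rw [← map_inv]
    rw [h1]
    ext
    · simp
    · simp

lemma iota_mul_pic (y : E) (b : kP) (X : AA) :
    pic φ y (ιι b * X) = b * pic φ y X := by
  induction b using ma_induction with
  | h0 => simp
  | hadd p q hp hq => rw [map_add, add_mul, map_add, hp, hq, ← add_mul]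
  | hsingle u d =>
    refine MonoidAlgebra.ext (Finsupp.ext fun v => ?_)
    rw [pic_apply, iota_single, MonoidAlgebra.single_mul_apply,
      MonoidAlgebra.single_mul_apply, pic_apply]
    have h2 : (inl u : P ⋊[φ] E)⁻¹ * ⟨v, y⟩ = (⟨u⁻¹ * v, y⟩ : P ⋊[φ] E) := by
      rw [← map_inv]
      ext <;> simp
    rw [h2]

lemma eq_iota_pic {X : AA} (h : ∀ y : E, y ≠ 1 → pic φ y X = 0) :
    X = ιι (pic φ 1 X) := by
  refine MonoidAlgebra.ext (Finsupp.ext fun g => ?_)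
  obtain ⟨v, z⟩ := g
  by_cases hz : z = 1
  · subst hz
    rw [iota_apply_one, pic_apply]
  · rw [iota_apply_ne φ _ _ hz]
    have h3 : (pic φ z X).coeff v = 0 := by rw [h z hz]; rfl
    rw [pic_apply] at h3
    exact h3

lemma hatf_add (f g : Module.End k kP) : hatf φ (f + g) = hatf φ f + hatf φ g := by
  refine lhom_ext₁ fun x => ?_
  obtain ⟨u, y⟩ := x
  simp only [LinearMap.add_apply, hatf_single, one_smul, LinearMap.add_apply, map_add, add_mul]

lemma hatf_sub (f g : Module.End k kP) : hatf φ (f - g) = hatf φ f - hatf φ g := by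
  refine lhom_ext₁ fun x => ?_
  obtain ⟨u, y⟩ := x
  simp only [LinearMap.sub_apply, hatf_single, one_smul, LinearMap.sub_apply, map_sub, sub_mul]

lemma hatf_smul (s : k) (f : Module.End k kP) : hatf φ (s • f) = s • hatf φ f := by
  refine lhom_ext₁ fun x => ?_
  obtain ⟨u, y⟩ := x
  simp only [LinearMap.smul_apply, hatf_single, one_smul, map_smul, smul_mul_assoc]

lemma hatf_lie (f g : Module.End k kP) : hatf φ ⁅f, g⁆ = ⁅hatf φ f, hatf φ g⁆ := by
  refine lhom_ext₁ fun x => ?_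
  obtain ⟨u, y⟩ := x
  simp only [Ring.lie_def, LinearMap.sub_apply, Module.End.mul_apply, hatf_single, one_smul,
    map_sub, sub_mul, hatf_iota_mul]

lemma mem_innerIdeal {B : Type*} [Ring B] [Algebra k B] {f : derivLie k B} :
    f ∈ innerIdeal k B ↔ ∃ c : B, (f : Module.End k B) = innerDeriv k c := Iff.rfl

lemma innerDeriv_tau {c : kP} (hst : IsEStable k φ (innerDeriv k c)) (e : E) :
    innerDeriv k (MonoidAlgebra.domCongr k k (φ e) c) = innerDeriv k c := by
  refine LinearMap.ext fun b => ?_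
  have h := hst e ((MonoidAlgebra.domCongr k k (φ e)).symm b)
  simp only [innerDeriv_apply, map_sub, map_mul, AlgEquiv.apply_symm_apply] at h
  rw [innerDeriv_apply, innerDeriv_apply, h]

lemma innerDeriv_finsum {B : Type*} [Ring B] [Algebra k B] {ι : Type*} (s : Finset ι)
    (c : ι → B) : innerDeriv k (∑ i ∈ s, c i) = ∑ i ∈ s, innerDeriv k (c i) :=
  map_sum (AddMonoidHom.mk' (innerDeriv k (A := B)) innerDeriv_add) c s

variable [Fintype E]

/-- average of `c` over the `E`-action -/
noncomputable def avgE (c : kP) : kP :=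
  (Fintype.card E : k)⁻¹ • ∑ e : E, MonoidAlgebra.domCongr k k (φ e) c

lemma avgE_stable (c : kP) (e' : E) :
    MonoidAlgebra.domCongr k k (φ e') (avgE φ c) = avgE φ c := by
  rw [avgE, map_smul, map_sum]
  congr 1
  refine Fintype.sum_equiv (Equiv.mulLeft e') _ _ fun e => ?_
  rw [tau_tau]
  rfl

lemma avgE_innerDeriv (hcard : (Fintype.card E : k) ≠ 0) {c : kP}
    (hst : IsEStable k φ (innerDeriv k c)) :
    innerDeriv k (avgE φ c) = innerDeriv k c := by
  rw [avgE, innerDeriv_smul, innerDeriv_finsum]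
  have : ∀ e : E, e ∈ Finset.univ →
      innerDeriv k (MonoidAlgebra.domCongr k k (φ e) c) = innerDeriv k c :=
    fun e _ => innerDeriv_tau φ hst e
  rw [Finset.sum_congr rfl this, Finset.sum_const, Finset.card_univ,
    ← Nat.cast_smul_eq_nsmul k, smul_smul, inv_mul_cancel₀ hcard, one_smul]

lemma hatf_innerDeriv_stable {c : kP} (hc : ∀ e : E, MonoidAlgebra.domCongr k k (φ e) c = c) :
    hatf φ (innerDeriv k c) = innerDeriv k (ιι c) := by
  refine lhom_ext₁ fun x => ?_
  obtain ⟨u, y⟩ := x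
  rw [hatf_single, one_smul, innerDeriv_apply, innerDeriv_apply,
    single_eq_iota_mul φ u y 1, ← mul_assoc, ← map_mul, mul_assoc, inr_mul_iota, hc y,
    ← mul_assoc, ← map_mul, map_sub, sub_mul]

lemma hatf_inner_of_inner (hcard : (Fintype.card E : k) ≠ 0) {d : Module.End k kP}
    (hd : IsEStable k φ d) {c : kP} (hdc : d = innerDeriv k c) :
    ∃ C : AA, hatf φ d = innerDeriv k C := by
  refine ⟨ιι (avgE φ c), ?_⟩
  subst hdc
  rw [← hatf_innerDeriv_stable φ (avgE_stable φ c), avgE_innerDeriv φ hcard hd]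

set_option linter.unusedSectionVars false

lemma IsEStable.add' {f g : Module.End k kP} (hf : IsEStable k φ f) (hg : IsEStable k φ g) :
    IsEStable k φ (f + g) := fun e a => by
  simp only [LinearMap.add_apply, hf e a, hg e a, map_add]

lemma IsEStable.sub' {f g : Module.End k kP} (hf : IsEStable k φ f) (hg : IsEStable k φ g) :
    IsEStable k φ (f - g) := fun e a => by
  simp only [LinearMap.sub_apply, hf e a, hg e a, map_sub]

lemma IsEStable.smul' (s : k) {f : Module.End k kP} (hf : IsEStable k φ f) :
    IsEStable k φ (s • f) := fun e a => by
  simp only [LinearMap.smul_apply, hf e a, map_smul]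

lemma IsEStable.lie' {f g : Module.End k kP} (hf : IsEStable k φ f) (hg : IsEStable k φ g) :
    IsEStable k φ ⁅f, g⁆ := fun e a => by
  simp only [Ring.lie_def, LinearMap.sub_apply, Module.End.mul_apply, hf e, hg e, map_sub]

/-- the lift of an `E`-stable derivation as an element of `derivLie` -/
noncomputable def hatD (f : derivLie k kP) (hf : IsEStable k φ (f : Module.End k kP)) :
    derivLie k AA :=
  ⟨hatf φ (f : Module.End k kP), hatf_isDerivation φ f.2 hf⟩

lemma hat_mk_eq (hcard : (Fintype.card E : k) ≠ 0) (f f' : derivLie k kP)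
    (hf : IsEStable k φ (f : Module.End k kP)) (hf' : IsEStable k φ (f' : Module.End k kP))
    (h : LieSubmodule.Quotient.mk (N := innerIdeal k kP) f =
         LieSubmodule.Quotient.mk (N := innerIdeal k kP) f') :
    LieSubmodule.Quotient.mk (N := innerIdeal k AA) (hatD φ f hf) =
      LieSubmodule.Quotient.mk (N := innerIdeal k AA) (hatD φ f' hf') := by
  have hsub : f - f' ∈ innerIdeal k kP := (Submodule.Quotient.eq _).mp h
  obtain ⟨c, hc⟩ := mem_innerIdeal.mp hsub
  have hstab : IsEStable k φ ((f : Module.End k kP) - (f' : Module.End k kP)) :=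
    IsEStable.sub' φ hf hf'
  have hcoe : ((f - f' : derivLie k kP) : Module.End k kP) =
      (f : Module.End k kP) - (f' : Module.End k kP) := rfl
  rw [hcoe] at hc
  obtain ⟨C, hC⟩ := hatf_inner_of_inner φ hcard hstab hc
  rw [Submodule.Quotient.eq]
  refine mem_innerIdeal.mpr ⟨C, ?_⟩
  have h2 : ((hatD φ f hf - hatD φ f' hf' : derivLie k AA) : Module.End k AA) =
      hatf φ ((f : Module.End k kP) - (f' : Module.End k kP)) := by
    rw [hatf_sub]
    rfl
  rw [h2, hC]

lemma mem_eStableHH1 {x : HH1 k kP} :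
    x ∈ eStableHH1 k φ ↔ ∃ f : derivLie k kP,
      IsEStable k φ (f : Module.End k kP) ∧
      LieSubmodule.Quotient.mk (N := innerIdeal k kP) f = x := Iff.rfl

/-- a chosen `E`-stable representative of a class in `HH^1(kP)^E` -/
noncomputable def chooseRep (x : eStableHH1 k φ) : derivLie k kP :=
  (mem_eStableHH1 φ |>.mp x.2).choose

lemma chooseRep_stable (x : eStableHH1 k φ) :
    IsEStable k φ (chooseRep φ x : Module.End k kP) :=
  (mem_eStableHH1 φ |>.mp x.2).choose_spec.1

lemma chooseRep_mk (x : eStableHH1 k φ) :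
    LieSubmodule.Quotient.mk (N := innerIdeal k kP) (chooseRep φ x) = x.1 :=
  (mem_eStableHH1 φ |>.mp x.2).choose_spec.2

set_option maxHeartbeats 1000000 in
/-- The homomorphism `HH^1(kP)^E → HH^1(k(P⋊E))` induced by `f ↦ f̂`. -/
noncomputable def Theta (hcard : (Fintype.card E : k) ≠ 0) :
    eStableHH1 k φ →ₗ⁅k⁆ HH1 k AA where
  toFun x := LieSubmodule.Quotient.mk (N := innerIdeal k AA)
    (hatD φ (chooseRep φ x) (chooseRep_stable φ x))
  map_add' x y := by
    have h : LieSubmodule.Quotient.mk (N := innerIdeal k kP)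
        (chooseRep φ x + chooseRep φ y) = (x + y).1 := by
      have h1 : (x + y).1 = x.1 + y.1 := rfl
      rw [h1, ← chooseRep_mk φ x, ← chooseRep_mk φ y, ← Submodule.Quotient.mk_add]
    have step := hat_mk_eq φ hcard (chooseRep φ (x + y))
      (chooseRep φ x + chooseRep φ y) (chooseRep_stable φ (x + y))
      (IsEStable.add' φ (chooseRep_stable φ x) (chooseRep_stable φ y))
      ((chooseRep_mk φ (x + y)).trans h.symm)
    rw [step]
    have hsplit : hatD φ (chooseRep φ x + chooseRep φ y)
        (IsEStable.add' φ (chooseRep_stable φ x) (chooseRep_stable φ y)) =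
        hatD φ (chooseRep φ x) (chooseRep_stable φ x) +
          hatD φ (chooseRep φ y) (chooseRep_stable φ y) :=
      Subtype.ext (hatf_add φ _ _)
    rw [hsplit]
    rfl
  map_smul' s x := by
    have h : LieSubmodule.Quotient.mk (N := innerIdeal k kP)
        (s • chooseRep φ x) = (s • x).1 := by
      have h1 : (s • x).1 = s • x.1 := rfl
      rw [h1, ← chooseRep_mk φ x, ← Submodule.Quotient.mk_smul]
    have step := hat_mk_eq φ hcard (chooseRep φ (s • x))
      (s • chooseRep φ x) (chooseRep_stable φ (s • x))
      (IsEStable.smul' φ s (chooseRep_stable φ x))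
      ((chooseRep_mk φ (s • x)).trans h.symm)
    rw [RingHom.id_apply, step]
    have hsplit : hatD φ (s • chooseRep φ x)
        (IsEStable.smul' φ s (chooseRep_stable φ x)) =
        s • hatD φ (chooseRep φ x) (chooseRep_stable φ x) :=
      Subtype.ext (hatf_smul φ s _)
    rw [hsplit]
    rfl
  map_lie' {x y} := by
    have h : LieSubmodule.Quotient.mk (N := innerIdeal k kP)
        ⁅chooseRep φ x, chooseRep φ y⁆ = (⁅x, y⁆ : eStableHH1 k φ).1 := by
      have h1 : (⁅x, y⁆ : eStableHH1 k φ).1 = ⁅x.1, y.1⁆ := rfl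
      rw [h1, ← chooseRep_mk φ x, ← chooseRep_mk φ y, ← LieSubmodule.Quotient.mk_bracket]
    have step := hat_mk_eq φ hcard (chooseRep φ ⁅x, y⁆)
      ⁅chooseRep φ x, chooseRep φ y⁆ (chooseRep_stable φ ⁅x, y⁆)
      (IsEStable.lie' φ (chooseRep_stable φ x) (chooseRep_stable φ y))
      ((chooseRep_mk φ ⁅x, y⁆).trans h.symm)
    rw [step]
    have hsplit : hatD φ ⁅chooseRep φ x, chooseRep φ y⁆
        (IsEStable.lie' φ (chooseRep_stable φ x) (chooseRep_stable φ y)) =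
        ⁅hatD φ (chooseRep φ x) (chooseRep_stable φ x),
          hatD φ (chooseRep φ y) (chooseRep_stable φ y)⁆ :=
      Subtype.ext (hatf_lie φ _ _)
    rw [hsplit, LieSubmodule.Quotient.mk_bracket]

lemma Theta_eq (hcard : (Fintype.card E : k) ≠ 0) (x : eStableHH1 k φ)
    (f : derivLie k kP) (hf : IsEStable k φ (f : Module.End k kP))
    (hx : LieSubmodule.Quotient.mk (N := innerIdeal k kP) f = x.1) :
    Theta φ hcard x = LieSubmodule.Quotient.mk (N := innerIdeal k AA) (hatD φ f hf) :=
  hat_mk_eq φ hcard (chooseRep φ x) f (chooseRep_stable φ x) hf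
    ((chooseRep_mk φ x).trans hx.symm)

lemma deriv_eq_inner_of_hat_inner {f : Module.End k kP} {C : AA}
    (hC : hatf φ f = innerDeriv k C) : f = innerDeriv k (pic φ 1 C) := by
  refine lhom_ext₁ fun u => ?_
  have h1 : ιι (f (MonoidAlgebra.single u 1)) =
      innerDeriv k C (ιι (MonoidAlgebra.single u 1)) := by
    rw [← hC, hatf_iota]
  have h2 := congrArg (pic φ 1) h1
  rw [pic_iota_one, innerDeriv_apply, map_sub, pic_mul_iota, tau_one,
    iota_mul_pic] at h2
  rw [h2, innerDeriv_apply]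

lemma Theta_zero (hcard : (Fintype.card E : k) ≠ 0) (x : eStableHH1 k φ)
    (hx : Theta φ hcard x = 0) : x = 0 := by
  have h1 : LieSubmodule.Quotient.mk (N := innerIdeal k AA)
      (hatD φ (chooseRep φ x) (chooseRep_stable φ x)) = 0 := hx
  rw [LieSubmodule.Quotient.mk_eq_zero'] at h1
  obtain ⟨C, hC⟩ := mem_innerIdeal.mp h1
  have hC' : hatf φ (chooseRep φ x : Module.End k kP) = innerDeriv k C := hC
  have h2 : (chooseRep φ x : Module.End k kP) = innerDeriv k (pic φ 1 C) :=
    deriv_eq_inner_of_hat_inner φ hC'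
  have h3 : chooseRep φ x ∈ innerIdeal k kP := mem_innerIdeal.mpr ⟨pic φ 1 C, h2⟩
  have h4 : x.1 = 0 := by
    rw [← chooseRep_mk φ x, LieSubmodule.Quotient.mk_eq_zero']
    exact h3
  exact Subtype.ext h4

lemma Theta_injective (hcard : (Fintype.card E : k) ≠ 0) :
    Function.Injective (Theta φ hcard) := by
  intro x y hxy
  have h0 : Theta φ hcard (x - y) = 0 := by
    have hts := map_sub (Theta φ hcard).toLinearMap x y
    have e1 : Theta φ hcard (x - y) = (Theta φ hcard).toLinearMap (x - y) := rfl
    have e2 : (Theta φ hcard).toLinearMap x = Theta φ hcard x := rfl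
    have e3 : (Theta φ hcard).toLinearMap y = Theta φ hcard y := rfl
    rw [e1, hts, e2, e3, hxy, sub_self]
  have := Theta_zero φ hcard _ h0
  rwa [sub_eq_zero] at this

section Twisted

variable {σ : MulAut P}

omit [Group E] in
lemma fpf_conj [Finite P] (hfree : ∀ u : P, σ u = u → u = 1)
    (u v : P) (h : u * v * (σ u)⁻¹ = v) : u = 1 := by
  have hinj : Function.Injective (fun x : P => x⁻¹ * σ x) := by
    intro x z hxz
    dsimp only at hxz
    have key : σ z * (σ x)⁻¹ = z * x⁻¹ := by
      calc σ z * (σ x)⁻¹ = z * (z⁻¹ * σ z) * (σ x)⁻¹ := by group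
      _ = z * (x⁻¹ * σ x) * (σ x)⁻¹ := by rw [← hxz]
      _ = z * x⁻¹ := by group
    have h2 : σ (z * x⁻¹) = z * x⁻¹ := by rw [map_mul, map_inv, key]
    have h3 := hfree _ h2
    have h4 : z = x := by
      have := congrArg (fun t => t * x) h3
      simpa using this
    exact h4.symm
  obtain ⟨x, hx⟩ := Finite.injective_iff_surjective.mp hinj v
  dsimp only at hx
  have h' : u * v = v * σ u := by
    have := congrArg (fun t => t * σ u) h
    simpa [mul_assoc] using this
  have hσu : σ u = v⁻¹ * u * v := by
    calc σ u = v⁻¹ * (v * σ u) := by group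
    _ = v⁻¹ * (u * v) := by rw [← h']
    _ = v⁻¹ * u * v := by group
  have h3 : σ (x * u * x⁻¹) = x * u * x⁻¹ := by
    calc σ (x * u * x⁻¹) = σ x * σ u * (σ x)⁻¹ := by rw [map_mul, map_mul, map_inv]
    _ = σ x * (v⁻¹ * u * v) * (σ x)⁻¹ := by rw [hσu]
    _ = σ x * ((x⁻¹ * σ x)⁻¹ * u * (x⁻¹ * σ x)) * (σ x)⁻¹ := by rw [hx]
    _ = x * u * x⁻¹ := by group
  have h4 := hfree _ h3
  have : u = x⁻¹ * (x * u * x⁻¹) * x := by group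
  rw [h4] at this
  simpa using this

variable (σ) in
/-- twisted conjugation action -/
def act (u v : P) : P := u * v * (σ u)⁻¹

omit [Group E] in
lemma act_act (u w v : P) : act σ u (act σ w v) = act σ (u * w) v := by
  simp only [act, map_mul, mul_inv_rev]
  group

omit [Group E] in
lemma act_one (v : P) : act σ 1 v = v := by simp [act]

variable (σ) in
/-- the orbit relation of the twisted conjugation action -/
def orbSetoid : Setoid P :=
  ⟨fun v w => ∃ u, act σ u v = w,
   fun v => ⟨1, act_one v⟩,
   fun {v w} h => by
     obtain ⟨u, rfl⟩ := h
     exact ⟨u⁻¹, by rw [act_act]; simp [act_one]⟩,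
   fun {v w z} h1 h2 => by
     obtain ⟨u, rfl⟩ := h1
     obtain ⟨u', rfl⟩ := h2
     exact ⟨u' * u, (act_act u' u v).symm ▸ rfl⟩⟩

variable (σ) in
noncomputable def orbRep (v : P) : P := (Quotient.mk (orbSetoid σ) v).out

omit [Group E] in
lemma orbRep_rel (v : P) : ∃ u, act σ u (orbRep σ v) = v :=
  Quotient.mk_out (s := orbSetoid σ) v

variable (σ) in
noncomputable def beta (v : P) : P := (orbRep_rel (σ := σ) v).choose

omit [Group E] in
lemma beta_spec (v : P) : act σ (beta σ v) (orbRep σ v) = v :=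
  (orbRep_rel (σ := σ) v).choose_spec

omit [Group E] in
lemma beta_uniq (hst : ∀ u v : P, act σ u v = v → u = 1) (v u : P)
    (h : act σ u (orbRep σ v) = v) : u = beta σ v := by
  have h1 : act σ ((beta σ v)⁻¹ * u) (orbRep σ v) = orbRep σ v := by
    rw [← act_act, h]
    have h2 := beta_spec (σ := σ) v
    have h3 := congrArg (act σ (beta σ v)⁻¹) h2
    rw [act_act, inv_mul_cancel, act_one] at h3
    exact h3.symm ▸ h3
  have := hst _ _ h1
  rwa [inv_mul_eq_one, eq_comm] at this

omit [Group E] in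
lemma orbRep_act (u v : P) : orbRep σ (act σ u v) = orbRep σ v := by
  have : (Quotient.mk (orbSetoid σ) v) = Quotient.mk (orbSetoid σ) (act σ u v) :=
    Quotient.sound ⟨u, rfl⟩
  unfold orbRep
  rw [← this]

omit [Group E] in
lemma beta_act (hst : ∀ u v : P, act σ u v = v → u = 1) (u v : P) :
    beta σ (act σ u v) = u * beta σ v := by
  refine (beta_uniq hst (act σ u v) (u * beta σ v) ?_).symm
  rw [orbRep_act, ← act_act, beta_spec]

omit [Group E] in
lemma twisted_inner [Fintype P] (hst : ∀ u v : P, act σ u v = v → u = 1)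
    (h : MonoidAlgebra k P →ₗ[k] MonoidAlgebra k P)
    (hder : ∀ u v : P, h (MonoidAlgebra.single u 1 * MonoidAlgebra.single v 1) =
      h (MonoidAlgebra.single u 1) * MonoidAlgebra.single (σ v) 1 +
      MonoidAlgebra.single u 1 * h (MonoidAlgebra.single v 1)) :
    ∃ d : MonoidAlgebra k P, ∀ a : MonoidAlgebra k P,
      h a = d * MonoidAlgebra.domCongr k k (σ : P ≃* P) a - a * d := by
  classical
  set c : P → MonoidAlgebra k P :=
    fun u => h (MonoidAlgebra.single u 1) * MonoidAlgebra.single ((σ u)⁻¹ : P) 1 with hc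
  have hcoc : ∀ u v : P, c (u * v) =
      c u + MonoidAlgebra.single u 1 * c v * MonoidAlgebra.single ((σ u)⁻¹ : P) 1 := by
    intro u v
    have hd := hder u v
    rw [MonoidAlgebra.single_mul_single, one_mul] at hd
    rw [hc]
    dsimp only
    rw [hd, add_mul]
    congr 1
    · rw [mul_assoc, MonoidAlgebra.single_mul_single, one_mul, map_mul, mul_inv_rev,
        mul_inv_cancel_left]
    · rw [mul_assoc, mul_assoc, mul_assoc, MonoidAlgebra.single_mul_single, one_mul,
        map_mul, mul_inv_rev]
  have hcoef : ∀ (u : P) (m : MonoidAlgebra k P) (x : P),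
      ((MonoidAlgebra.single u (1:k) * m *
        MonoidAlgebra.single ((σ u)⁻¹ : P) (1:k) : MonoidAlgebra k P)).coeff x =
        m.coeff (u⁻¹ * x * σ u) := by
    intro u m x
    rw [MonoidAlgebra.mul_single_apply, MonoidAlgebra.single_mul_apply, one_mul, mul_one,
      inv_inv, mul_assoc]
  set d : MonoidAlgebra k P := MonoidAlgebra.ofCoeff
      (Finsupp.equivFunOnFinite.symm (fun x : P => (c (beta σ x)).coeff x))
    with hdd
  have hd : ∀ x : P, d.coeff x = (c (beta σ x)).coeff x := fun x => rfl
  have hmain : ∀ u : P, c u =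
      d - MonoidAlgebra.single u 1 * d * MonoidAlgebra.single ((σ u)⁻¹ : P) 1 := by
    intro u
    refine MonoidAlgebra.ext (Finsupp.ext fun x => ?_)
    rw [MonoidAlgebra.coeff_sub, Finsupp.sub_apply, hcoef u d x, hd, hd]
    have hactx : u⁻¹ * x * σ u = act σ u⁻¹ x := by
      rw [act, map_inv, inv_inv]
    have hβx : beta σ (act σ u⁻¹ x) = u⁻¹ * beta σ x := beta_act hst u⁻¹ x
    have hco := hcoc u (u⁻¹ * beta σ x)
    rw [mul_inv_cancel_left] at hco
    have hco2 : (c (beta σ x)).coeff x = (c u).coeff x +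
        (c (u⁻¹ * beta σ x)).coeff (u⁻¹ * x * σ u) := by
      rw [hco]
      rw [MonoidAlgebra.coeff_add, Finsupp.add_apply, hcoef]
    rw [hactx, hβx, ← hactx, hco2]
    ring
  refine ⟨d, ?_⟩
  have hkey : ∀ u : P, h (MonoidAlgebra.single u 1) =
      d * MonoidAlgebra.single (σ u : P) 1 - MonoidAlgebra.single u 1 * d := by
    intro u
    have h1 : h (MonoidAlgebra.single u 1) = c u * MonoidAlgebra.single (σ u : P) 1 := by
      rw [hc]
      dsimp only
      rw [mul_assoc, MonoidAlgebra.single_mul_single, one_mul, inv_mul_cancel]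
      have : (MonoidAlgebra.single (1 : P) (1 : k)) = (1 : MonoidAlgebra k P) := rfl
      rw [this, mul_one]
    rw [h1, hmain u, sub_mul, mul_assoc, mul_assoc, MonoidAlgebra.single_mul_single,
      one_mul, inv_mul_cancel]
    have : (MonoidAlgebra.single (1 : P) (1 : k)) = (1 : MonoidAlgebra k P) := rfl
    rw [this, mul_one]
  intro a
  induction a using ma_induction with
  | h0 => simp
  | hadd p q hp hq => rw [map_add, hp, hq, map_add, mul_add, add_mul]; abel
  | hsingle u e =>
    have hs : (MonoidAlgebra.single u e : MonoidAlgebra k P) =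
        e • MonoidAlgebra.single u 1 := by rw [MonoidAlgebra.smul_single', mul_one]
    rw [hs, map_smul, map_smul, hkey u, MonoidAlgebra.domCongr_single, smul_mul_assoc,
      mul_smul_comm, smul_sub]

end Twisted

lemma iota_injective : Function.Injective (ιι) := by
  have : Function.Injective (MonoidAlgebra.mapDomain (inl : P →* P ⋊[φ] E) :
      MonoidAlgebra k P → AA) :=
    MonoidAlgebra.mapDomain_injective SemidirectProduct.inl_injective
  exact fun a b hab => this hab

lemma IsDerivation.sub'' {B : Type*} [Ring B] [Algebra k B] {f g : Module.End k B}
    (hf : IsDerivation f) (hg : IsDerivation g) : IsDerivation (f - g) := by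
  intro a b
  simp only [LinearMap.sub_apply, hf a b, hg a b, sub_mul, mul_sub]
  abel

lemma pic_iota_mul_inr_eq (y : E) (b : kP) :
    pic φ y (ιι b * MonoidAlgebra.single (inr y : P ⋊[φ] E) 1) = b := by
  refine MonoidAlgebra.ext (Finsupp.ext fun u => ?_)
  rw [pic_apply, MonoidAlgebra.mul_single_apply, mul_one]
  have hg : (⟨u, y⟩ : P ⋊[φ] E) * (inr y : P ⋊[φ] E)⁻¹ = ⟨u, 1⟩ := by
    rw [← map_inv]
    ext <;> simp
  rw [hg, iota_apply_one]

lemma pic_iota_mul_inr_ne {y y₀ : E} (hne : y₀ ≠ y) (b : kP) :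
    pic φ y₀ (ιι b * MonoidAlgebra.single (inr y : P ⋊[φ] E) 1) = 0 := by
  refine MonoidAlgebra.ext (Finsupp.ext fun u => ?_)
  rw [pic_apply, MonoidAlgebra.mul_single_apply, mul_one]
  have hg : (⟨u, y₀⟩ : P ⋊[φ] E) * (inr y : P ⋊[φ] E)⁻¹ = ⟨u, y₀ * y⁻¹⟩ := by
    rw [← map_inv]
    ext <;> simp
  rw [hg, iota_apply_ne φ b u (by
    intro hcon
    exact hne (by rwa [mul_inv_eq_one] at hcon))]
  rfl

lemma conj_formula (z : E) (X : AA) (u : P) (y : E) :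
    ((MonoidAlgebra.single (inr z : P ⋊[φ] E) (1:k) * X *
      MonoidAlgebra.single (inr z⁻¹ : P ⋊[φ] E) (1:k) : AA)).coeff ⟨u, y⟩ =
      X.coeff ⟨φ z⁻¹ u, z⁻¹ * y * z⟩ := by
  rw [MonoidAlgebra.mul_single_apply, MonoidAlgebra.single_mul_apply, one_mul, mul_one]
  congr 1
  have h1 : ((inr z⁻¹ : P ⋊[φ] E))⁻¹ = inr z := by rw [← map_inv, inv_inv]
  have h2 : ((inr z : P ⋊[φ] E))⁻¹ = inr z⁻¹ := by rw [← map_inv]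
  rw [h1, h2]
  ext <;> simp [mul_assoc]

lemma pic_conj (z : E) (X : AA) (y : E) :
    pic φ y (MonoidAlgebra.single (inr z : P ⋊[φ] E) 1 * X *
      MonoidAlgebra.single (inr z⁻¹ : P ⋊[φ] E) 1) =
      MonoidAlgebra.domCongr k k (φ z) (pic φ (z⁻¹ * y * z) X) := by
  refine MonoidAlgebra.ext (Finsupp.ext fun u => ?_)
  rw [pic_apply, conj_formula, MonoidAlgebra.domCongr_apply, pic_apply]
  have h3 : (φ z).symm u = φ z⁻¹ u := by rw [map_inv, ← MulAut.inv_def]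
  rw [h3]

lemma deriv_conj {g : Module.End k AA} (hg : IsDerivation g)
    (hg0 : ∀ z : E, g (MonoidAlgebra.single (inr z : P ⋊[φ] E) 1) = 0) (z : E) (X : AA) :
    g (MonoidAlgebra.single (inr z : P ⋊[φ] E) 1 * X *
      MonoidAlgebra.single (inr z⁻¹ : P ⋊[φ] E) 1) =
      MonoidAlgebra.single (inr z : P ⋊[φ] E) 1 * g X *
        MonoidAlgebra.single (inr z⁻¹ : P ⋊[φ] E) 1 := by
  rw [hg (MonoidAlgebra.single (inr z : P ⋊[φ] E) 1 * X)
    (MonoidAlgebra.single (inr z⁻¹ : P ⋊[φ] E) 1),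
    hg (MonoidAlgebra.single (inr z : P ⋊[φ] E) 1) X, hg0, hg0, zero_mul, zero_add,
    mul_zero, add_zero]

lemma iota_conj (z : E) (a : kP) :
    MonoidAlgebra.single (inr z : P ⋊[φ] E) 1 * ιι a *
      MonoidAlgebra.single (inr z⁻¹ : P ⋊[φ] E) 1 =
      ιι (MonoidAlgebra.domCongr k k (φ z) a) := by
  rw [inr_mul_iota, mul_assoc, MonoidAlgebra.single_mul_single, one_mul, ← map_mul,
    mul_inv_cancel, single_inr_one, mul_one]

lemma kE_kill [Fintype E] (hcard : (Fintype.card E : k) ≠ 0) {g : Module.End k AA}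
    (hg : IsDerivation g) :
    ∃ c₀ : AA, ∀ z : E,
      (g - innerDeriv k c₀) (MonoidAlgebra.single (inr z : P ⋊[φ] E) 1) = 0 := by
  classical
  set Y : E → AA := fun y => MonoidAlgebra.single (inr y : P ⋊[φ] E) 1 with hY
  have hYmul : ∀ y z, Y y * Y z = Y (y * z) := fun y z => by
    simp only [hY]
    rw [MonoidAlgebra.single_mul_single, one_mul, map_mul]
  have hYone : Y 1 = 1 := by
    simp only [hY]
    rw [map_one]
    rfl
  refine ⟨(Fintype.card E : k)⁻¹ • ∑ y : E, g (Y y) * Y y⁻¹, fun z => ?_⟩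
  have key : (∑ y : E, g (Y y) * Y y⁻¹) * Y z - Y z * (∑ y : E, g (Y y) * Y y⁻¹) =
      (Fintype.card E : k) • g (Y z) := by
    rw [Finset.sum_mul, Finset.mul_sum]
    have h1 : ∀ y : E, g (Y y) * Y y⁻¹ * Y z = g (Y y) * Y (y⁻¹ * z) := by
      intro y; rw [mul_assoc, hYmul]
    have h2 : ∀ y : E, Y z * (g (Y y) * Y y⁻¹) =
        g (Y (z * y)) * Y y⁻¹ - g (Y z) * (Y y * Y y⁻¹) := by
      intro y
      have h3 := hg (Y z) (Y y)
      rw [hYmul] at h3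
      have h4 : Y z * g (Y y) = g (Y (z * y)) - g (Y z) * Y y := by rw [h3]; abel
      rw [← mul_assoc, h4, sub_mul, mul_assoc]
    rw [Finset.sum_congr rfl (fun y _ => h1 y), Finset.sum_congr rfl (fun y _ => h2 y),
      Finset.sum_sub_distrib]
    have h5 : ∀ y : E, g (Y z) * (Y y * Y y⁻¹) = g (Y z) := by
      intro y; rw [hYmul, mul_inv_cancel, hYone, mul_one]
    have h6 : ∑ y : E, g (Y (z * y)) * Y y⁻¹ = ∑ w : E, g (Y w) * Y (w⁻¹ * z) := by
      refine Fintype.sum_equiv (Equiv.mulLeft z) _ _ fun y => ?_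
      have h7 : (z * y)⁻¹ * z = y⁻¹ := by group
      simp only [Equiv.coe_mulLeft]
      rw [h7]
    rw [Finset.sum_congr rfl (fun y _ => h5 y), Finset.sum_const, Finset.card_univ, h6,
      sub_sub_cancel, ← Nat.cast_smul_eq_nsmul k]
  show (g - innerDeriv k ((Fintype.card E : k)⁻¹ • ∑ y : E, g (Y y) * Y y⁻¹)) (Y z) = 0
  rw [LinearMap.sub_apply, innerDeriv_apply, smul_mul_assoc, mul_smul_comm, ← smul_sub, key,
    smul_smul, inv_mul_cancel₀ hcard, one_smul, sub_self]

lemma surj_key [Fintype P] [Fintype E] (hcard : (Fintype.card E : k) ≠ 0)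
    (hfree : ∀ (e : E) (u : P), φ e u = u → u = 1 ∨ e = 1)
    (g : Module.End k AA) (hg : IsDerivation g)
    (hg0 : ∀ z : E, g (MonoidAlgebra.single (inr z : P ⋊[φ] E) 1) = 0) :
    ∃ (f : Module.End k kP) (D : AA), IsDerivation f ∧ IsEStable k φ f ∧
      g = hatf φ f + innerDeriv k D := by
  classical
  set hcomp : E → (MonoidAlgebra k P →ₗ[k] MonoidAlgebra k P) :=
    fun y => (pic φ y) ∘ₗ (g ∘ₗ (iotaP k φ).toLinearMap) with hhcomp
  have hcomp_apply : ∀ (y : E) (a : kP), hcomp y a = pic φ y (g (ιι a)) := fun y a => rfl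
  have hcomp_der : ∀ (y : E) (u v : P),
      hcomp y (MonoidAlgebra.single u 1 * MonoidAlgebra.single v 1) =
        hcomp y (MonoidAlgebra.single u 1) * MonoidAlgebra.single (φ y v) 1 +
          MonoidAlgebra.single u 1 * hcomp y (MonoidAlgebra.single v 1) := by
    intro y u v
    rw [hcomp_apply, hcomp_apply, hcomp_apply, map_mul (iotaP k φ),
      hg (ιι (MonoidAlgebra.single u 1)) (ιι (MonoidAlgebra.single v 1)), map_add,
      pic_mul_iota, iota_mul_pic, MonoidAlgebra.domCongr_single]
  have hdy : ∀ y : E, y ≠ 1 → ∃ d : kP, ∀ a : kP,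
      hcomp y a = d * MonoidAlgebra.domCongr k k (φ y) a - a * d := by
    intro y hy
    have hfpf : ∀ u : P, φ y u = u → u = 1 := fun u hu => (hfree y u hu).resolve_right hy
    have hst : ∀ u v : P, act (φ y) u v = v → u = 1 := by
      intro u v huv
      exact fpf_conj hfpf u v huv
    exact twisted_inner hst (hcomp y) (fun u v => hcomp_der y u v)
  choose! dm0 hdm0 using hdy
  set dm : E → MonoidAlgebra k P := fun y => if y = 1 then 0 else dm0 y with hdmdef
  have hdm : ∀ (y : E), y ≠ 1 → ∀ a : kP,
      hcomp y a = dm y * MonoidAlgebra.domCongr k k (φ y) a - a * dm y := by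
    intro y hy a
    rw [hdmdef]
    simp only [if_neg hy]
    exact hdm0 y hy a
  have hcomp_equiv : ∀ (y z : E) (a : kP),
      hcomp y (MonoidAlgebra.domCongr k k (φ z) a) =
        MonoidAlgebra.domCongr k k (φ z) (hcomp (z⁻¹ * y * z) a) := by
    intro y z a
    rw [hcomp_apply, hcomp_apply, ← iota_conj, deriv_conj φ hg hg0, pic_conj]
  set Dy : E → MonoidAlgebra k P := fun y =>
    (Fintype.card E : k)⁻¹ • ∑ z : E, MonoidAlgebra.domCongr k k (φ z) (dm (z⁻¹ * y * z))
    with hDy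
  have hterm : ∀ (y : E), y ≠ 1 → ∀ (a : kP) (z : E), hcomp y a =
      MonoidAlgebra.domCongr k k (φ z) (dm (z⁻¹ * y * z)) *
        MonoidAlgebra.domCongr k k (φ y) a -
      a * MonoidAlgebra.domCongr k k (φ z) (dm (z⁻¹ * y * z)) := by
    intro y hy a z
    have hy' : z⁻¹ * y * z ≠ 1 := by
      intro hcon
      apply hy
      have h8 : y = z * (z⁻¹ * y * z) * z⁻¹ := by group
      rw [h8, hcon, mul_one, mul_inv_cancel]
    have hab : MonoidAlgebra.domCongr k k (φ z) (MonoidAlgebra.domCongr k k (φ z⁻¹) a) =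
        a := by
      rw [tau_tau, mul_inv_cancel, tau_one]
    have heq := hcomp_equiv y z (MonoidAlgebra.domCongr k k (φ z⁻¹) a)
    rw [hab] at heq
    rw [heq, hdm (z⁻¹ * y * z) hy' _, map_sub,
      map_mul (MonoidAlgebra.domCongr k k (φ z)), map_mul (MonoidAlgebra.domCongr k k (φ z)),
      hab, tau_tau, tau_tau]
    have harg : z * (z⁻¹ * y * z) * z⁻¹ = y := by group
    rw [harg]
  have hDy_solve : ∀ (y : E), y ≠ 1 → ∀ a : kP,
      hcomp y a = Dy y * MonoidAlgebra.domCongr k k (φ y) a - a * Dy y := by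
    intro y hy a
    rw [hDy]
    dsimp only
    rw [smul_mul_assoc, mul_smul_comm, ← smul_sub, Finset.sum_mul, Finset.mul_sum,
      ← Finset.sum_sub_distrib,
      Finset.sum_congr rfl (fun z _ => (hterm y hy a z).symm),
      Finset.sum_const, Finset.card_univ, ← Nat.cast_smul_eq_nsmul k, smul_smul,
      inv_mul_cancel₀ hcard, one_smul]
  have hDy_equiv : ∀ (w y : E),
      MonoidAlgebra.domCongr k k (φ w) (Dy y) = Dy (w * y * w⁻¹) := by
    intro w y
    rw [hDy]
    dsimp only
    rw [map_smul, map_sum]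
    congr 1
    refine Fintype.sum_equiv (Equiv.mulLeft w) _ _ fun z => ?_
    simp only [Equiv.coe_mulLeft]
    rw [tau_tau]
    have harg : (w * z)⁻¹ * (w * y * w⁻¹) * (w * z) = z⁻¹ * y * z := by group
    rw [harg]
  have hDy_one : Dy 1 = 0 := by
    rw [hDy]
    dsimp only
    have hz : ∀ z : E, MonoidAlgebra.domCongr k k (φ z) (dm (z⁻¹ * 1 * z)) = 0 := by
      intro z
      have : z⁻¹ * 1 * z = 1 := by group
      rw [this, hdmdef]
      simp
    rw [Finset.sum_congr rfl (fun z _ => hz z), Finset.sum_const, smul_zero, smul_zero]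
  set D : AA := ∑ y : E, ιι (Dy y) * MonoidAlgebra.single (inr y : P ⋊[φ] E) 1 with hD
  have hDcomm : ∀ z : E,
      MonoidAlgebra.single (inr z : P ⋊[φ] E) 1 * D =
        D * MonoidAlgebra.single (inr z : P ⋊[φ] E) 1 := by
    intro z
    rw [hD, Finset.mul_sum, Finset.sum_mul]
    refine Fintype.sum_equiv ((Equiv.mulLeft z).trans (Equiv.mulRight z⁻¹)) _ _ fun y => ?_
    simp only [Equiv.trans_apply, Equiv.coe_mulLeft, Equiv.coe_mulRight]
    have harg : z * y * z⁻¹ * z = z * y := by group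
    have hsingles : (MonoidAlgebra.single (inr (z * y * z⁻¹) : P ⋊[φ] E) (1:k)) *
        MonoidAlgebra.single (inr z : P ⋊[φ] E) 1 =
        MonoidAlgebra.single (inr z : P ⋊[φ] E) 1 *
          MonoidAlgebra.single (inr y : P ⋊[φ] E) 1 := by
      rw [MonoidAlgebra.single_mul_single, MonoidAlgebra.single_mul_single, one_mul,
        ← map_mul, ← map_mul, harg]
    rw [inr_mul_iota', hDy_equiv, mul_assoc (ιι (Dy (z * y * z⁻¹))), hsingles]
  have hinnerD_inr : ∀ z : E,
      innerDeriv k D (MonoidAlgebra.single (inr z : P ⋊[φ] E) 1) = 0 := by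
    intro z
    rw [innerDeriv_apply, hDcomm z, sub_self]
  have hterm1 : ∀ (w : E) (a : kP),
      (ιι (Dy w) * MonoidAlgebra.single (inr w : P ⋊[φ] E) 1) * ιι a =
        ιι (Dy w * MonoidAlgebra.domCongr k k (φ w) a) *
          MonoidAlgebra.single (inr w : P ⋊[φ] E) 1 := by
    intro w a
    rw [mul_assoc, inr_mul_iota, ← mul_assoc, ← map_mul]
  have hterm2 : ∀ (w : E) (a : kP),
      ιι a * (ιι (Dy w) * MonoidAlgebra.single (inr w : P ⋊[φ] E) 1) =
        ιι (a * Dy w) * MonoidAlgebra.single (inr w : P ⋊[φ] E) 1 := by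
    intro w a
    rw [← mul_assoc, ← map_mul]
  have hinner_comp : ∀ (y : E) (a : kP), pic φ y (innerDeriv k D (ιι a)) =
      Dy y * MonoidAlgebra.domCongr k k (φ y) a - a * Dy y := by
    intro y a
    rw [innerDeriv_apply, map_sub, hD, Finset.sum_mul, Finset.mul_sum, map_sum, map_sum,
      Finset.sum_congr rfl (fun w _ => congrArg (pic φ y) (hterm1 w a)),
      Finset.sum_congr rfl (fun w _ => congrArg (pic φ y) (hterm2 w a))]
    rw [Finset.sum_eq_single y
      (fun w _ hwy => pic_iota_mul_inr_ne φ (Ne.symm hwy) _)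
      (fun hnm => absurd (Finset.mem_univ y) hnm)]
    rw [Finset.sum_eq_single y
      (fun w _ hwy => pic_iota_mul_inr_ne φ (Ne.symm hwy) _)
      (fun hnm => absurd (Finset.mem_univ y) hnm)]
    rw [pic_iota_mul_inr_eq, pic_iota_mul_inr_eq]
  set g₂ : Module.End k AA := g - innerDeriv k D with hg₂
  have hg₂der : IsDerivation g₂ := IsDerivation.sub'' hg (innerDeriv_isDerivation D)
  have hg₂0 : ∀ z : E, g₂ (MonoidAlgebra.single (inr z : P ⋊[φ] E) 1) = 0 := by
    intro z
    rw [hg₂, LinearMap.sub_apply, hg0, hinnerD_inr, sub_self]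
  have hg₂comp : ∀ (y : E), y ≠ 1 → ∀ a : kP, pic φ y (g₂ (ιι a)) = 0 := by
    intro y hy a
    rw [hg₂, LinearMap.sub_apply, map_sub, hinner_comp, ← hcomp_apply, hDy_solve y hy a,
      sub_self]
  set f : Module.End k (MonoidAlgebra k P) :=
    (pic φ 1) ∘ₗ (g₂ ∘ₗ (iotaP k φ).toLinearMap) with hfdef
  have hfi : ∀ a : kP, g₂ (ιι a) = ιι (f a) :=
    fun a => eq_iota_pic φ (X := g₂ (ιι a)) (fun y hy => hg₂comp y hy a)
  have hfder : IsDerivation f := by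
    intro a b
    apply iota_injective φ
    rw [map_add (iotaP k φ), ← hfi, map_mul (iotaP k φ), hg₂der (ιι a) (ιι b), hfi, hfi,
      ← map_mul (iotaP k φ), ← map_mul (iotaP k φ)]
  have hfstable : IsEStable k φ f := by
    intro e a
    apply iota_injective φ
    rw [← hfi, ← iota_conj φ e a, deriv_conj φ hg₂der hg₂0, hfi, iota_conj]
  refine ⟨f, D, hfder, hfstable, ?_⟩
  have hhat : g₂ = hatf φ f := hatf_unique φ hg₂der hfi hg₂0
  rw [← hhat, hg₂, sub_add_cancel]

lemma innerDeriv_neg {B : Type*} [Ring B] [Algebra k B] (c : B) :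
    innerDeriv k (-c) = - innerDeriv k c := by
  refine LinearMap.ext fun a => ?_
  rw [innerDeriv_apply, LinearMap.neg_apply, innerDeriv_apply]
  simp only [neg_mul, mul_neg]
  abel

end Proof


open SemidirectProduct in
/-- Let `P` be a finite `p`-group and `E` a finite `p'`-group acting on `P`.
(i) Every `E`-stable derivation `f` on `kP` extends uniquely to a derivation `f̂` on
`k(P⋊E)` vanishing on `kE`, explicitly `f̂(uy) = f(u)y`;
(ii) `f ↦ f̂` induces an injective Lie algebra homomorphism `HH^1(kP)^E → HH^1(k(P⋊E))`;
(iii) if `E` acts freely on `P∖{1}`, this homomorphism is an isomorphism. -/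
theorem stmt8 (k : Type*) [Field k] (p : ℕ) [Fact p.Prime] [CharP k p]
    (P : Type*) [Group P] [Fintype P] (hP : IsPGroup p P)
    (E : Type*) [Group E] [Fintype E] (hE : ¬ p ∣ Fintype.card E)
    (φ : E →* MulAut P) :
    -- (i) unique extension
    (∀ f : Module.End k (MonoidAlgebra k P), IsDerivation f → IsEStable k φ f →
      (∃! g : Module.End k (MonoidAlgebra k (P ⋊[φ] E)), IsDerivation g ∧
        (∀ a : MonoidAlgebra k P, g (iotaP k φ a) = iotaP k φ (f a)) ∧
        (∀ y : E, g (MonoidAlgebra.single (inr y : P ⋊[φ] E) 1) = 0)) ∧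
      (∀ g : Module.End k (MonoidAlgebra k (P ⋊[φ] E)), (IsDerivation g ∧
        (∀ a : MonoidAlgebra k P, g (iotaP k φ a) = iotaP k φ (f a)) ∧
        (∀ y : E, g (MonoidAlgebra.single (inr y : P ⋊[φ] E) 1) = 0)) →
        ∀ (u : P) (y : E), g (MonoidAlgebra.single ((inl u : P ⋊[φ] E) * inr y) 1) =
          iotaP k φ (f (MonoidAlgebra.single u 1)) *
            MonoidAlgebra.single (inr y : P ⋊[φ] E) 1)) ∧
    -- (ii), (iii)
    (∃ Θ : eStableHH1 k φ →ₗ⁅k⁆ HH1 k (MonoidAlgebra k (P ⋊[φ] E)),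
      Function.Injective Θ ∧
      -- `Θ` is induced by the correspondence `f ↦ f̂`
      (∀ (f : derivLie k (MonoidAlgebra k P))
          (hf : IsEStable k φ (f : Module.End k (MonoidAlgebra k P)))
          (g : derivLie k (MonoidAlgebra k (P ⋊[φ] E))),
        (∀ a : MonoidAlgebra k P,
          (g : Module.End k (MonoidAlgebra k (P ⋊[φ] E))) (iotaP k φ a) =
            iotaP k φ ((f : Module.End k (MonoidAlgebra k P)) a)) →
        (∀ y : E, (g : Module.End k (MonoidAlgebra k (P ⋊[φ] E)))
          (MonoidAlgebra.single (inr y : P ⋊[φ] E) 1) = 0) →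
        Θ ⟨LieSubmodule.Quotient.mk (N := innerIdeal k (MonoidAlgebra k P)) f, f, hf, rfl⟩ =
          LieSubmodule.Quotient.mk (N := innerIdeal k (MonoidAlgebra k (P ⋊[φ] E))) g) ∧
      -- (iii) if `E` acts freely on `P∖{1}` then `Θ` is an isomorphism
      ((∀ (e : E) (u : P), φ e u = u → u = 1 ∨ e = 1) → Function.Surjective Θ)) := by
  have hcard : (Fintype.card E : k) ≠ 0 := by
    intro h
    exact hE ((CharP.cast_eq_zero_iff k p (Fintype.card E)).mp h)
  constructor
  · intro f hf hst
    constructor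
    · refine ⟨hatf φ f, ⟨hatf_isDerivation φ hf hst, hatf_iota φ f, hatf_inr φ hf⟩, ?_⟩
      rintro g ⟨hgder, hgi, hge⟩
      exact hatf_unique φ hgder hgi hge
    · rintro g ⟨hgder, hgi, hge⟩ u y
      rw [show ((inl u : P ⋊[φ] E) * inr y) = (⟨u, y⟩ : P ⋊[φ] E) from inl_mul_inr φ u y,
        single_eq_iota_mul φ u y 1, hgder _ _, hgi, hge, mul_zero, add_zero]
  · refine ⟨Theta φ hcard, Theta_injective φ hcard, ?_, ?_⟩
    · intro f hf g hgi hge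
      rw [Theta_eq φ hcard
        ⟨LieSubmodule.Quotient.mk (N := innerIdeal k (MonoidAlgebra k P)) f, f, hf, rfl⟩
        f hf rfl]
      exact congrArg _ (Subtype.ext (hatf_unique φ g.2 hgi hge).symm)
    · intro hfree t
      obtain ⟨gd, rfl⟩ := Submodule.Quotient.mk_surjective _ t
      obtain ⟨c₀, hc₀⟩ := kE_kill φ hcard gd.2
      obtain ⟨f, D, hfder, hfst, hsum⟩ := surj_key φ hcard hfree
        ((gd : Module.End k (MonoidAlgebra k (P ⋊[φ] E))) - innerDeriv k c₀)
        (IsDerivation.sub'' gd.2 (innerDeriv_isDerivation c₀)) hc₀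
      refine ⟨⟨LieSubmodule.Quotient.mk (N := innerIdeal k (MonoidAlgebra k P)) ⟨f, hfder⟩,
        ⟨f, hfder⟩, hfst, rfl⟩, ?_⟩
      rw [Theta_eq φ hcard _ ⟨f, hfder⟩ hfst rfl]
      rw [Submodule.Quotient.eq]
      refine mem_innerIdeal.mpr ⟨-(D + c₀), ?_⟩
      have hval : ((hatD φ ⟨f, hfder⟩ hfst - gd :
          derivLie k (MonoidAlgebra k (P ⋊[φ] E))) :
          Module.End k (MonoidAlgebra k (P ⋊[φ] E))) =
          hatf φ f - (gd : Module.End k (MonoidAlgebra k (P ⋊[φ] E))) := rfl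
      have h2 : hatf φ f = (gd : Module.End k (MonoidAlgebra k (P ⋊[φ] E)))
          - innerDeriv k c₀ - innerDeriv k D := by
        rw [hsum]
        abel
      rw [hval, h2, innerDeriv_neg, innerDeriv_add]
      abel

end HHPaper
end

section
/- Let k be a field of prime characteristic p, let P be a non-trivial finite abelian p-group, set J = J(kP) and n = dim_k(J/J²). The canonical map Der_1(kP) → End_k(J/J²) ≅ gl_n(k), sending a derivation preserving J to the induced k-linear endomorphism of J/J², is a surjective Lie algebra homomorphism, and its kernel is Der_2(kP), the nilpotent Lie ideal of derivations with image contained in J². -/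
namespace HHPaper

attribute [local instance] LieRing.ofAssociativeRing

open MonoidAlgebra

variable (k A : Type*) [CommRing k] [Ring A] [Algebra k A] in
/-- The quotient `J(A)/J(A)²` as a `k`-module. -/
abbrev radQuot : Type _ :=
  ↥(jacRad k A) ⧸ ((jacRad k A ^ 2).comap (jacRad k A).subtype)

section Stmt10Aux

open MonoidAlgebra

variable {k : Type*} [Field k] {A : Type*} [CommRing A] [Algebra k A]

lemma jacRad_pow_eq' (n : ℕ) :
    jacRad k A ^ (n + 1) =
      Submodule.restrictScalars k ((⊥ : Ideal A).jacobson ^ (n + 1)) := by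
  induction n with
  | zero => rw [pow_one, pow_one]; rfl
  | succ n ih => rw [pow_succ, ih, pow_succ, Submodule.restrictScalars_mul]; rfl

lemma IsDerivation.mapsPow {f : Module.End k A} (hf : IsDerivation f) {a : ℕ}
    (hr : ∀ x, f x ∈ jacRad k A ^ a) :
    ∀ (b : ℕ) (x : A), x ∈ jacRad k A ^ (b + 1) → f x ∈ jacRad k A ^ (a + b) := by
  intro b
  induction b with
  | zero => intro x _; simpa using hr x
  | succ b ih =>
    intro x hx
    rw [pow_succ] at hx
    refine Submodule.mul_induction_on hx (fun m hm n hn => ?_) (fun y z hy hz => ?_)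
    · rw [hf m n]
      refine add_mem ?_ ?_
      · have := Submodule.mul_mem_mul (ih m hm) (by simpa [pow_one] using hn :
          n ∈ jacRad k A ^ 1)
        rwa [← pow_add] at this
      · have := Submodule.mul_mem_mul hm (hr n)
        rw [← pow_add] at this
        rwa [show b + 1 + a = a + (b + 1) by omega] at this
    · rw [map_add]; exact add_mem hy hz

lemma der1_apply_mem {f : Module.End k A} (hf : f ∈ derivRadLie k A 1) (x : A) :
    f x ∈ jacRad k A := by
  have := hf.2 (LinearMap.mem_range_self f x)
  rwa [pow_one] at this

lemma der1_apply_pow_one {f : Module.End k A} (hf : f ∈ derivRadLie k A 1) (x : A) :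
    f x ∈ jacRad k A ^ 1 := by
  rw [pow_one]; exact der1_apply_mem hf x

lemma der1_apply_mem_sq {f : Module.End k A} (hf : f ∈ derivRadLie k A 1) {x : A}
    (hx : x ∈ jacRad k A ^ 2) : f x ∈ jacRad k A ^ 2 :=
  hf.1.mapsPow (der1_apply_pow_one hf) 1 x hx

variable (k A) in
/-- The endomorphism of `J/J²` induced by an element of `Der₁`. -/
noncomputable def thetaMap (f : derivRadLie k A 1) :
    Module.End k (radQuot k A) :=
  Submodule.mapQ _ _
    ((f : Module.End k A).restrict
      (p := jacRad k A) (q := jacRad k A) (fun x _ => der1_apply_mem f.2 x))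
    (fun x hx => by
      simp only [Submodule.mem_comap, LinearMap.restrict_apply, Submodule.subtype_apply] at hx ⊢
      exact der1_apply_mem_sq f.2 hx)

lemma thetaMap_mk (f : derivRadLie k A 1) (x : ↥(jacRad k A)) :
    thetaMap k A f (Submodule.Quotient.mk x) =
      Submodule.Quotient.mk
        ⟨(f : Module.End k A) x, der1_apply_mem f.2 x⟩ := by
  rw [thetaMap, Submodule.mapQ_apply]
  rfl

variable (k A) in
/-- The canonical Lie algebra homomorphism `Der₁ → End(J/J²)`. -/
noncomputable def theta :
    derivRadLie k A 1 →ₗ⁅k⁆ Module.End k (radQuot k A) where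
  toFun := thetaMap k A
  map_add' f g := by
    apply Submodule.linearMap_qext
    apply LinearMap.ext
    intro x
    simp only [LinearMap.comp_apply, Submodule.mkQ_apply, LinearMap.add_apply, thetaMap_mk,
      ← Submodule.Quotient.mk_add]
    rfl
  map_smul' c f := by
    apply Submodule.linearMap_qext
    apply LinearMap.ext
    intro x
    simp only [LinearMap.comp_apply, Submodule.mkQ_apply, RingHom.id_apply,
      LinearMap.smul_apply, thetaMap_mk, ← Submodule.Quotient.mk_smul]
    rfl
  map_lie' {f g} := by
    apply Submodule.linearMap_qext
    apply LinearMap.ext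
    intro x
    simp only [LinearMap.comp_apply, Submodule.mkQ_apply, thetaMap_mk, Ring.lie_def,
      LinearMap.sub_apply, Module.End.mul_apply, Module.End.lie_apply]
    rw [← Submodule.Quotient.mk_sub]
    exact congrArg _ (Subtype.ext (by simp [Ring.lie_def]))

lemma theta_apply (f : derivRadLie k A 1) (x : ↥(jacRad k A)) :
    theta k A f (Submodule.Quotient.mk x) =
      Submodule.Quotient.mk
        ⟨(f : Module.End k A) x, der1_apply_mem f.2 x⟩ :=
  thetaMap_mk f x

end Stmt10Aux
set_option linter.unusedSectionVars false

section Stmt10GA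

open MonoidAlgebra

variable {k : Type*} [Field k] {p : ℕ} [Fact p.Prime] [CharP k p]
  {P : Type*} [CommGroup P] [Fintype P]

instance : Module.Finite k (MonoidAlgebra k P) :=
  MonoidAlgebra.moduleFinite

instance : CharP (MonoidAlgebra k P) p :=
  charP_of_injective_algebraMap (algebraMap k (MonoidAlgebra k P)).injective p

variable (k P) in
/-- The augmentation homomorphism `kP → k`. -/
noncomputable def aug : MonoidAlgebra k P →ₐ[k] k := MonoidAlgebra.lift k k P 1

lemma aug_single (g : P) (c : k) : aug k P (single g c) = c := by
  rw [aug, MonoidAlgebra.lift_single]; simp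

lemma aug_surjective : Function.Surjective (aug k P) :=
  fun c => ⟨single 1 c, aug_single 1 c⟩

variable (k P) in
/-- The set of elements `g - 1` spanning the augmentation ideal. -/
def genSet : Set (MonoidAlgebra k P) := Set.range fun g : P => of k P g - 1

lemma sub_aug_mem_span (y : MonoidAlgebra k P) :
    y - algebraMap k (MonoidAlgebra k P) (aug k P y) ∈ Submodule.span k (genSet k P) := by
  induction y using MonoidAlgebra.induction_on with
  | of g =>
    have h1 : aug k P (of k P g) = 1 := aug_single g 1
    rw [h1, map_one]
    exact Submodule.subset_span ⟨g, rfl⟩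
  | add f g hf hg =>
    have h := add_mem hf hg
    convert h using 1
    rw [map_add, map_add]
    ring
  | smul r f hf =>
    have h := Submodule.smul_mem _ r hf
    convert h using 1
    have h2 : algebraMap k (MonoidAlgebra k P) (r • aug k P f)
        = r • algebraMap k (MonoidAlgebra k P) (aug k P f) := by
      rw [smul_eq_mul, map_mul, ← Algebra.smul_def]
    rw [map_smul, h2, smul_sub]

lemma sub_one_nilpotent (hP : IsPGroup p P) (g : P) :
    IsNilpotent (of k P g - 1 : MonoidAlgebra k P) := by
  obtain ⟨n, hn⟩ := hP g
  refine ⟨p ^ n, ?_⟩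
  rw [sub_pow_char_pow, ← map_pow, hn, map_one, one_pow, sub_self]

lemma jacRad_eq_span (hP : IsPGroup p P) :
    jacRad k (MonoidAlgebra k P) = Submodule.span k (genSet k P) := by
  apply le_antisymm
  · intro x hx
    have hmax : (RingHom.ker (aug k P).toRingHom).IsMaximal :=
      RingHom.ker_isMaximal_of_surjective _ aug_surjective
    have hker : ((⊥ : Ideal (MonoidAlgebra k P)).jacobson) ≤
        RingHom.ker (aug k P).toRingHom := sInf_le ⟨bot_le, hmax⟩
    have hx0 : aug k P x = 0 := by
      have h := hker hx
      rwa [RingHom.mem_ker] at h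
    have h := sub_aug_mem_span (k := k) x
    rwa [hx0, map_zero, sub_zero] at h
  · rw [Submodule.span_le]
    rintro _ ⟨g, rfl⟩
    show (of k P g - 1 : MonoidAlgebra k P) ∈ jacRad k (MonoidAlgebra k P)
    rw [jacRad, Submodule.restrictScalars_mem, Ideal.mem_jacobson_bot]
    intro y
    exact ((Commute.all _ y).isNilpotent_mul_right (sub_one_nilpotent hP g)).isUnit_add_one

lemma exists_jacRad_pow_bot :
    ∃ N : ℕ, jacRad k (MonoidAlgebra k P) ^ (N + 2) = ⊥ := by
  haveI : IsArtinianRing (MonoidAlgebra k P) := IsArtinianRing.of_finite k _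
  obtain ⟨n, hn⟩ := IsArtinianRing.isNilpotent_jacobson_bot (R := MonoidAlgebra k P)
  refine ⟨n, ?_⟩
  have h2 : ((⊥ : Ideal (MonoidAlgebra k P)).jacobson) ^ (n + 2) = ⊥ := by
    rw [pow_add, hn, Ideal.zero_eq_bot]
    simp
  rw [show n + 2 = (n + 1) + 1 by omega, jacRad_pow_eq',
    show (n + 1) + 1 = n + 2 by omega, h2, Submodule.restrictScalars_bot]

variable (k) in
/-- The derivation associated with an additive map `δ : P → kP`, determined by
`g ↦ g · δ(g)`. -/
noncomputable def derOf (δ : P → MonoidAlgebra k P) : Module.End k (MonoidAlgebra k P) :=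
  (Finsupp.lsum k fun g : P =>
    LinearMap.toSpanSingleton k (MonoidAlgebra k P) (of k P g * δ g) :
      (P →₀ k) →ₗ[k] MonoidAlgebra k P) ∘ₗ (MonoidAlgebra.coeffLinearEquiv k).toLinearMap

lemma derOf_single (δ : P → MonoidAlgebra k P) (g : P) (c : k) :
    derOf k δ (single g c) = c • (of k P g * δ g) := by
  simp [derOf]

lemma derOf_of (δ : P → MonoidAlgebra k P) (g : P) :
    derOf k δ (of k P g) = of k P g * δ g := by
  rw [MonoidAlgebra.of_apply, derOf_single, one_smul]
  rfl

lemma isDerivation_derOf (δ : P → MonoidAlgebra k P)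
    (hδ : ∀ g h : P, δ (g * h) = δ g + δ h) : IsDerivation (derOf k δ) := by
  have key : ∀ (g : P) (b : MonoidAlgebra k P),
      derOf k δ (of k P g * b) = derOf k δ (of k P g) * b + of k P g * derOf k δ b := by
    intro g b
    induction b using MonoidAlgebra.induction_on with
    | of h =>
      rw [← map_mul, derOf_of, derOf_of, derOf_of, hδ, map_mul]
      ring
    | add b₁ b₂ h₁ h₂ => rw [mul_add, map_add, h₁, h₂, map_add]; ring
    | smul r b hb =>
      rw [mul_smul_comm, map_smul, hb, map_smul]
      simp only [smul_add, mul_smul_comm, smul_mul_assoc]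
  intro a b
  induction a using MonoidAlgebra.induction_on with
  | of g => exact key g b
  | add a₁ a₂ h₁ h₂ => rw [add_mul, map_add, h₁, h₂, map_add]; ring
  | smul r a ha =>
    rw [smul_mul_assoc, map_smul, ha, map_smul]
    simp only [smul_add, mul_smul_comm, smul_mul_assoc]

lemma derOf_mem (δ : P → MonoidAlgebra k P)
    (hδ : ∀ g, δ g ∈ jacRad k (MonoidAlgebra k P)) (x : MonoidAlgebra k P) :
    derOf k δ x ∈ jacRad k (MonoidAlgebra k P) := by
  induction x using MonoidAlgebra.induction_on with
  | of g =>
    rw [derOf_of]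
    exact Ideal.mul_mem_left _ _ (hδ g)
  | add a b ha hb => rw [map_add]; exact add_mem ha hb
  | smul r a ha => rw [map_smul]; exact Submodule.smul_mem _ _ ha

end Stmt10GA
section Stmt10Nilp

variable {k : Type*} [Field k] {A : Type*} [CommRing A] [Algebra k A]

lemma bracket_apply (f g : Module.End k A) (x : A) : ⁅f, g⁆ x = f (g x) - g (f x) := by
  simp [Ring.lie_def]

lemma bracket_range_pow {f g : Module.End k A} (hfd : IsDerivation f) (hgd : IsDerivation g)
    {m : ℕ} (hf : ∀ x, f x ∈ jacRad k A ^ 2) (hg : ∀ x, g x ∈ jacRad k A ^ (m + 2)) :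
    ∀ x, ⁅f, g⁆ x ∈ jacRad k A ^ (m + 3) := by
  intro x
  rw [bracket_apply]
  refine sub_mem ?_ ?_
  · have := hfd.mapsPow hf (m + 1) (g x) (hg x)
    rwa [show 2 + (m + 1) = m + 3 by omega] at this
  · exact hgd.mapsPow hg 1 (f x) (by simpa using hf x)

lemma der2_isNilpotent (hbot : ∃ N : ℕ, jacRad k A ^ (N + 2) = ⊥) :
    LieRing.IsNilpotent ↥(derivRadLie k A 2) := by
  obtain ⟨N, hN⟩ := hbot
  have haux : ∀ (x : ↥(derivRadLie k A 2)) (y : A),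
      (x : Module.End k A) y ∈ jacRad k A ^ 2 := fun x y =>
    x.2.2 (LinearMap.mem_range_self _ y)
  have claim : ∀ (m : ℕ) (x : ↥(derivRadLie k A 2)),
      x ∈ LieModule.lowerCentralSeries k ↥(derivRadLie k A 2) ↥(derivRadLie k A 2) m →
      ∀ y : A, (x : Module.End k A) y ∈ jacRad k A ^ (m + 2) := by
    intro m
    induction m with
    | zero => intro x _ y; exact haux x y
    | succ m ih =>
      intro x hx
      rw [LieModule.lowerCentralSeries_succ] at hx
      rw [← LieSubmodule.mem_toSubmodule, LieSubmodule.lieIdeal_oper_eq_linear_span] at hx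
      refine Submodule.span_induction (p := fun (z : ↥(derivRadLie k A 2)) _ =>
        ∀ y : A, (z : Module.End k A) y ∈ jacRad k A ^ (m + 1 + 2)) ?_ ?_ ?_ ?_ hx
      · rintro _ ⟨w, n, rfl⟩ y
        have hcoe : ((⁅(w : ↥(derivRadLie k A 2)), (n : ↥(derivRadLie k A 2))⁆ :
            ↥(derivRadLie k A 2)) : Module.End k A) =
            ⁅((w : ↥(derivRadLie k A 2)) : Module.End k A),
              ((n : ↥(derivRadLie k A 2)) : Module.End k A)⁆ := rfl
        rw [hcoe]
        exact bracket_range_pow (w : ↥(derivRadLie k A 2)).2.1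
          (n : ↥(derivRadLie k A 2)).2.1 (haux _) (ih _ n.2) y
      · intro y; simp
      · intro a b _ _ iha ihb y
        have : ((a + b : ↥(derivRadLie k A 2)) : Module.End k A) y
            = (a : Module.End k A) y + (b : Module.End k A) y := rfl
        rw [this]
        exact add_mem (iha y) (ihb y)
      · intro c a _ iha y
        have : ((c • a : ↥(derivRadLie k A 2)) : Module.End k A) y
            = c • ((a : Module.End k A) y) := rfl
        rw [this]
        exact Submodule.smul_mem _ _ (iha y)
  refine (LieModule.isNilpotent_iff k _ _).mpr ⟨N, ?_⟩
  refine (LieSubmodule.eq_bot_iff _).2 fun x hx => ?_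
  have h0 : (x : Module.End k A) = 0 := by
    apply LinearMap.ext
    intro y
    have := claim N x hx y
    rw [hN] at this
    simpa using this
  exact Subtype.ext h0

end Stmt10Nilp
set_option maxHeartbeats 2000000 in
set_option synthInstance.maxHeartbeats 400000 in
/-- For a non-trivial finite abelian `p`-group `P`, the canonical map
`Der_1(kP) → End_k(J/J²) ≅ gl_n(k)` (where `n = dim_k J/J²`) is a surjective Lie algebra
homomorphism whose kernel is `Der_2(kP)`, the nilpotent Lie ideal of derivations with image
contained in `J²`. -/
theorem stmt10 (k : Type*) [Field k] (p : ℕ) [Fact p.Prime] [CharP k p]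
    (P : Type*) [CommGroup P] [Fintype P] [Nontrivial P] (hP : IsPGroup p P) :
    ∃ Θ : derivRadLie k (MonoidAlgebra k P) 1 →ₗ⁅k⁆ Module.End k (radQuot k (MonoidAlgebra k P)),
      Function.Surjective Θ ∧
      -- `Θ` is the canonical map, sending a derivation preserving `J` to the induced
      -- endomorphism of `J/J²`
      (∀ (f : derivRadLie k (MonoidAlgebra k P) 1) (x : MonoidAlgebra k P)
          (hx : x ∈ jacRad k (MonoidAlgebra k P))
          (hfx : (f : Module.End k (MonoidAlgebra k P)) x ∈ jacRad k (MonoidAlgebra k P)),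
        Θ f (Submodule.Quotient.mk ⟨x, hx⟩) =
          Submodule.Quotient.mk ⟨(f : Module.End k (MonoidAlgebra k P)) x, hfx⟩) ∧
      -- the kernel of `Θ` is `Der_2(kP)`
      (∀ f : derivRadLie k (MonoidAlgebra k P) 1,
        Θ f = 0 ↔ LinearMap.range (f : Module.End k (MonoidAlgebra k P)) ≤
          jacRad k (MonoidAlgebra k P) ^ 2) ∧
      -- `Der_2(kP)` is a nilpotent Lie ideal in `Der_1(kP)`
      LieRing.IsNilpotent (derivRadLie k (MonoidAlgebra k P) 2) ∧
      (∀ f g : Module.End k (MonoidAlgebra k P),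
        f ∈ derivRadLie k (MonoidAlgebra k P) 1 → g ∈ derivRadLie k (MonoidAlgebra k P) 2 →
          ⁅f, g⁆ ∈ derivRadLie k (MonoidAlgebra k P) 2) ∧
      -- `End_k(J/J²) ≅ gl_n(k)` for `n = dim_k (J/J²)`
      Nonempty (Module.End k (radQuot k (MonoidAlgebra k P)) ≃ₗ⁅k⁆
        Matrix (Fin (Module.finrank k (radQuot k (MonoidAlgebra k P))))
          (Fin (Module.finrank k (radQuot k (MonoidAlgebra k P)))) k) := by
  classical
  have J_eq := jacRad_eq_span (k := k) (p := p) hP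
  have hmemg : ∀ g : P, (of k P g - 1 : MonoidAlgebra k P) ∈ jacRad k (MonoidAlgebra k P) :=
    fun g => by rw [J_eq]; exact Submodule.subset_span ⟨g, rfl⟩
  refine ⟨theta k (MonoidAlgebra k P), ?_, ?_, ?_, ?_, ?_, ?_⟩
  · -- surjectivity
    intro φ
    obtain ⟨σ, hσ⟩ := ((jacRad k (MonoidAlgebra k P) ^ 2).comap
        (jacRad k (MonoidAlgebra k P)).subtype).mkQ.exists_rightInverse_of_surjective
        (Submodule.range_mkQ _)
    have hmkσ : ∀ q : radQuot k (MonoidAlgebra k P), Submodule.Quotient.mk (σ q) = q :=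
      fun q => by simpa using LinearMap.congr_fun hσ q
    set tau : P → radQuot k (MonoidAlgebra k P) :=
      fun g => Submodule.Quotient.mk ⟨of k P g - 1, hmemg g⟩ with htau
    have htau_mul : ∀ g h : P, tau (g * h) = tau g + tau h := by
      intro g h
      simp only [htau]
      rw [← Submodule.Quotient.mk_add, Submodule.Quotient.eq]
      refine Submodule.mem_comap.2 ?_
      have hval : ((⟨of k P (g * h) - 1, hmemg (g * h)⟩ : ↥(jacRad k (MonoidAlgebra k P)))
          - (⟨of k P g - 1, hmemg g⟩ + ⟨of k P h - 1, hmemg h⟩) :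
            ↥(jacRad k (MonoidAlgebra k P))).1
          = (of k P g - 1) * (of k P h - 1) := by
        show (of k P (g * h) - 1) - ((of k P g - 1) + (of k P h - 1))
          = (of k P g - 1) * (of k P h - 1)
        rw [map_mul]; ring
      rw [Submodule.subtype_apply, hval, pow_two]
      exact Submodule.mul_mem_mul (hmemg g) (hmemg h)
    set δ : P → MonoidAlgebra k P := fun g => ((σ (φ (tau g)) :
        ↥(jacRad k (MonoidAlgebra k P))) : MonoidAlgebra k P) with hδdef
    have hδ_mul : ∀ g h : P, δ (g * h) = δ g + δ h := by
      intro g h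
      simp only [hδdef]
      rw [htau_mul, map_add, map_add]
      rfl
    have hδJ : ∀ g : P, δ g ∈ jacRad k (MonoidAlgebra k P) := fun g => (σ (φ (tau g))).2
    have hder : IsDerivation (derOf k δ) := isDerivation_derOf δ hδ_mul
    have hrange : LinearMap.range (derOf k δ) ≤ jacRad k (MonoidAlgebra k P) ^ 1 := by
      rintro _ ⟨x, rfl⟩
      rw [pow_one]
      exact derOf_mem δ hδJ x
    refine ⟨⟨derOf k δ, hder, hrange⟩, ?_⟩
    apply Submodule.linearMap_qext
    apply LinearMap.ext
    rintro ⟨x, hx⟩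
    simp only [LinearMap.comp_apply, Submodule.mkQ_apply]
    rw [theta_apply]
    have hx' : x ∈ Submodule.span k (genSet k P) := J_eq ▸ hx
    have key : ∀ (z : MonoidAlgebra k P), z ∈ Submodule.span k (genSet k P) →
        ∀ (hzJ : z ∈ jacRad k (MonoidAlgebra k P)),
        (Submodule.Quotient.mk ⟨derOf k δ z, derOf_mem δ hδJ z⟩ :
          radQuot k (MonoidAlgebra k P)) = φ (Submodule.Quotient.mk ⟨z, hzJ⟩) := by
      intro z hz
      refine Submodule.span_induction (p := fun (z : MonoidAlgebra k P) _ =>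
        ∀ (hzJ : z ∈ jacRad k (MonoidAlgebra k P)),
        (Submodule.Quotient.mk ⟨derOf k δ z, derOf_mem δ hδJ z⟩ :
          radQuot k (MonoidAlgebra k P)) = φ (Submodule.Quotient.mk ⟨z, hzJ⟩))
        ?_ ?_ ?_ ?_ hz
      · rintro _ ⟨g, rfl⟩ hzJ
        have hδ1 : δ 1 = 0 := by
          have ht1 : tau 1 = 0 := by
            simp only [htau]
            rw [Submodule.Quotient.mk_eq_zero]
            refine Submodule.mem_comap.2 ?_
            rw [Submodule.subtype_apply]
            show (of k P 1 - 1 : MonoidAlgebra k P) ∈ _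
            rw [map_one, sub_self]
            exact zero_mem _
          simp only [hδdef]
          rw [ht1, map_zero, map_zero]
          rfl
        have e1 : derOf k δ (of k P g - 1) = δ g + (of k P g - 1) * δ g := by
          rw [map_sub, derOf_of]
          have e2 : derOf k δ (1 : MonoidAlgebra k P) = 0 := by
            rw [show (1 : MonoidAlgebra k P) = of k P 1 from (map_one (of k P)).symm,
              derOf_of, hδ1, mul_zero]
          rw [e2, sub_zero]
          ring
        have h2J : (of k P g - 1) * δ g ∈ jacRad k (MonoidAlgebra k P) :=
          Ideal.mul_mem_left _ _ (hδJ g)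
        have hsplit : (⟨derOf k δ (of k P g - 1), derOf_mem δ hδJ _⟩ :
            ↥(jacRad k (MonoidAlgebra k P)))
            = σ (φ (tau g)) + ⟨(of k P g - 1) * δ g, h2J⟩ := by
          apply Subtype.ext
          show derOf k δ (of k P g - 1) = δ g + (of k P g - 1) * δ g
          exact e1
        rw [hsplit, Submodule.Quotient.mk_add, hmkσ]
        have hzero : (Submodule.Quotient.mk (⟨(of k P g - 1) * δ g, h2J⟩ :
            ↥(jacRad k (MonoidAlgebra k P))) : radQuot k (MonoidAlgebra k P)) = 0 := by
          rw [Submodule.Quotient.mk_eq_zero]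
          refine Submodule.mem_comap.2 ?_
          rw [Submodule.subtype_apply, pow_two]
          exact Submodule.mul_mem_mul (hmemg g) (hδJ g)
        rw [hzero, add_zero]
      · intro hzJ
        have l1 : (⟨derOf k δ 0, derOf_mem δ hδJ 0⟩ : ↥(jacRad k (MonoidAlgebra k P))) = 0 :=
          Subtype.ext (map_zero _)
        have l2 : (⟨(0 : MonoidAlgebra k P), hzJ⟩ : ↥(jacRad k (MonoidAlgebra k P))) = 0 := rfl
        rw [l1, l2, Submodule.Quotient.mk_zero, map_zero]
      · intro x y hxs hys ihx ihy hzJ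
        have hxJ : x ∈ jacRad k (MonoidAlgebra k P) := J_eq.ge hxs
        have hyJ : y ∈ jacRad k (MonoidAlgebra k P) := J_eq.ge hys
        have l1 : (⟨derOf k δ (x + y), derOf_mem δ hδJ _⟩ : ↥(jacRad k (MonoidAlgebra k P)))
            = ⟨derOf k δ x, derOf_mem δ hδJ x⟩ + ⟨derOf k δ y, derOf_mem δ hδJ y⟩ :=
          Subtype.ext (map_add _ x y)
        have l2 : (⟨x + y, hzJ⟩ : ↥(jacRad k (MonoidAlgebra k P)))
            = ⟨x, hxJ⟩ + ⟨y, hyJ⟩ := rfl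
        rw [l1, l2, Submodule.Quotient.mk_add, Submodule.Quotient.mk_add, map_add,
          ihx hxJ, ihy hyJ]
      · intro c x hxs ihx hzJ
        have hxJ : x ∈ jacRad k (MonoidAlgebra k P) := J_eq.ge hxs
        have l1 : (⟨derOf k δ (c • x), derOf_mem δ hδJ _⟩ : ↥(jacRad k (MonoidAlgebra k P)))
            = c • ⟨derOf k δ x, derOf_mem δ hδJ x⟩ :=
          Subtype.ext (map_smul _ c x)
        have l2 : (⟨c • x, hzJ⟩ : ↥(jacRad k (MonoidAlgebra k P)))
            = c • (⟨x, hxJ⟩ : ↥(jacRad k (MonoidAlgebra k P))) := rfl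
        rw [l1, l2, Submodule.Quotient.mk_smul, Submodule.Quotient.mk_smul, map_smul,
          ihx hxJ]
    exact key x hx' hx
  · -- the formula
    intro f x hx hfx
    rw [theta_apply]
  · -- kernel description
    intro f
    constructor
    · intro h
      rintro _ ⟨y, rfl⟩
      have hf1 : (f : Module.End k (MonoidAlgebra k P)) 1 = 0 := by
        have h2 := f.2.1 1 1
        rw [one_mul, one_mul, mul_one] at h2
        exact right_eq_add.mp h2
      have hy : y - algebraMap k (MonoidAlgebra k P) (aug k P y)
          ∈ jacRad k (MonoidAlgebra k P) := by
        rw [J_eq]; exact sub_aug_mem_span y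
      have hfy : (f : Module.End k (MonoidAlgebra k P)) y
          = (f : Module.End k (MonoidAlgebra k P)) (y - algebraMap k _ (aug k P y)) := by
        rw [map_sub, Algebra.algebraMap_eq_smul_one, map_smul, hf1, smul_zero, sub_zero]
      have h3 : theta k (MonoidAlgebra k P) f (Submodule.Quotient.mk ⟨_, hy⟩) = 0 := by
        rw [h]; rfl
      rw [theta_apply, Submodule.Quotient.mk_eq_zero] at h3
      have h4 := Submodule.mem_comap.1 h3
      rw [Submodule.subtype_apply] at h4
      rw [hfy]
      exact h4
    · intro h
      apply Submodule.linearMap_qext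
      apply LinearMap.ext
      rintro ⟨x, hx⟩
      simp only [LinearMap.comp_apply, Submodule.mkQ_apply, LinearMap.zero_apply]
      rw [theta_apply, Submodule.Quotient.mk_eq_zero]
      refine Submodule.mem_comap.2 ?_
      rw [Submodule.subtype_apply]
      exact h (LinearMap.mem_range_self _ x)
  · -- nilpotency
    exact der2_isNilpotent exists_jacRad_pow_bot
  · -- Lie ideal property
    intro f g hf hg
    refine ⟨hf.1.lie hg.1, ?_⟩
    rintro _ ⟨x, rfl⟩
    rw [bracket_apply]
    refine sub_mem ?_ ?_
    · have hgx : g x ∈ jacRad k (MonoidAlgebra k P) ^ (1 + 1) := by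
        simpa using hg.2 (LinearMap.mem_range_self _ x)
      simpa using hf.1.mapsPow (der1_apply_pow_one hf) 1 (g x) hgx
    · exact hg.2 (LinearMap.mem_range_self _ (f x))
  · -- matrix realization
    exact ⟨(algEquivMatrix (Module.finBasis k
      (radQuot k (MonoidAlgebra k P)))).toLieEquiv⟩

end HHPaper
end
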